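/- arXiv:math/0202252 — 4 statements merged into one kernel-verified Lean document; each statement's English description precedes it below -/
import Mathlib

section
/- Let (W,S) be a finite Coxeter system and W' = W_I a standard parabolic subgroup for I ⊆ S. Then the length function of (W_I, I) is the restriction to W_I of the length function of W, the Bruhat–Chevalley order of (W_I, I) is the restriction to W_I of the Bruhat–Chevalley order of W, and the pattern map φ: W → W_I satisfies the stronger property: for all x ∈ W and w ∈ W_I, φ(x) ≤' φ(wx) if and only if x ≤ wx. -/
open Polynomial

variable {W : Type*} [Group W]

noncomputable def genLength (T : Set W) (w : W) : ℕ :=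
  sInf {n | ∃ l : List W, (∀ g ∈ l, g ∈ T) ∧ l.length = n ∧ l.prod = w}

def genReflections (T : Set W) : Set W :=
  {r | ∃ u ∈ Subgroup.closure T, ∃ t ∈ T, r = u * t * u⁻¹}

def genBruhatLE (T : Set W) : W → W → Prop :=
  Relation.ReflTransGen (fun x y => genLength T x < genLength T y ∧ x * y⁻¹ ∈ genReflections T)

namespace CoxAux

open CoxeterSystem List

variable {B : Type*} {M : CoxeterMatrix B} (cs : CoxeterSystem M W)

local prefix:100 "s" => cs.simple
local prefix:100 "π" => cs.wordProd
local prefix:100 "ℓ" => cs.length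
local prefix:100 "ris" => cs.rightInvSeq
local prefix:100 "lis" => cs.leftInvSeq

noncomputable instance : DecidableEq W := Classical.decEq W

/-- The sign-cocycle involution. -/
noncomputable def eta (i : B) : Equiv.Perm (W × ℤˣ) :=
  Function.Involutive.toPerm
    (fun p => (s i * p.1 * s i, if p.1 = s i then -p.2 else p.2))
    (by
      intro ⟨t, ε⟩
      have h1 : s i * (s i * t * s i) * s i = t := by
        rw [← mul_assoc, ← mul_assoc, cs.simple_mul_simple_self, one_mul,
          mul_assoc, cs.simple_mul_simple_self, mul_one]
      have h2 : (s i * t * s i = s i) ↔ (t = s i) := by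
        constructor
        · intro h
          have h3 := h1
          rw [h] at h3
          rw [← h3, cs.simple_mul_simple_self, one_mul]
        · rintro rfl
          rw [cs.simple_mul_simple_self, one_mul]
      show (s i * (s i * t * s i) * s i,
        if s i * t * s i = s i then -(if t = s i then -ε else ε)
          else (if t = s i then -ε else ε)) = (t, ε)
      rw [h1]
      by_cases ht : t = s i <;> simp [ht, h2])

theorem eta_apply (i : B) (t : W) (ε : ℤˣ) :
    eta cs i (t, ε) = (s i * t * s i, if t = s i then -ε else ε) := rfl

theorem prod_map_eta (ω : List B) (t : W) (ε : ℤˣ) :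
    ((ω.map (eta cs)).prod) (t, ε) =
      (π ω * t * (π ω)⁻¹, ((-1 : ℤˣ) ^ (List.count t (ris ω))) * ε) := by
  induction ω generalizing ε with
  | nil => simp
  | cons i ω ih =>
    have hris : ris (i :: ω) = ((π ω)⁻¹ * s i * π ω) :: ris ω := rfl
    rw [List.map_cons, List.prod_cons, Equiv.Perm.mul_apply, ih, eta_apply]
    have hcond : (π ω * t * (π ω)⁻¹ = s i) ↔ (t = (π ω)⁻¹ * s i * π ω) := by
      constructor
      · intro h; rw [← h]; group
      · intro h; rw [h]; group
    rw [hris, cs.wordProd_cons, Prod.mk.injEq]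
    constructor
    · rw [mul_inv_rev, cs.inv_simple]; group
    · rw [List.count_cons]
      by_cases hc : t = (π ω)⁻¹ * s i * π ω
      · rw [if_pos (hcond.mpr hc), if_pos (by simp [beq_iff_eq, hc])]
        rw [pow_succ]
        simp [mul_comm, mul_assoc, neg_mul, mul_neg]
      · rw [if_neg (fun h => hc (hcond.mp h)), if_neg (by simp [beq_iff_eq]; exact fun h => hc h.symm)]
        simp

theorem alt_two_step (i i' : B) (m : ℕ) :
    alternatingWord i i' (2*m+2) = i :: i' :: alternatingWord i i' (2*m) := by
  rw [alternatingWord_succ', alternatingWord_succ']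
  have h1 : ¬ Even (2*m+1) := by simp [Nat.even_add_one]
  have h2 : Even (2*m) := even_two_mul m
  rw [if_neg h1, if_pos h2]

theorem prod_map_alt {G : Type*} [Monoid G] (f : B → G) (i i' : B) (m : ℕ) :
    ((alternatingWord i i' (2*m)).map f).prod = (f i * f i')^m := by
  induction m with
  | zero => simp [CoxeterSystem.alternatingWord]
  | succ m ih =>
    have : 2*(m+1) = 2*m+2 := by ring
    rw [this, alt_two_step, List.map_cons, List.map_cons, List.prod_cons, List.prod_cons,
      ih, ← mul_assoc, ← pow_succ']

theorem inv_pow_mul_simple (i i' : B) (k : ℕ) :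
    ((s i * s i')⁻¹)^k * s i' = s i' * (s i * s i')^k := by
  induction k with
  | zero => simp
  | succ k ih =>
    have hq : (s i * s i')⁻¹ * s i' = s i' * (s i * s i') := by
      rw [mul_inv_rev, cs.inv_simple, cs.inv_simple, mul_assoc]
    calc ((s i * s i')⁻¹)^(k+1) * s i'
        = (s i * s i')⁻¹ * (((s i * s i')⁻¹)^k * s i') := by
          rw [pow_succ']; group
      _ = (s i * s i')⁻¹ * s i' * (s i * s i')^k := by rw [ih]; group
      _ = s i' * (s i * s i')^(k+1) := by rw [hq]; rw [mul_assoc, ← pow_succ']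

theorem conj_alt_prod (i i' : B) (n : ℕ) :
    (π (alternatingWord i i' n))⁻¹ * s (if Even n then i' else i) * π (alternatingWord i i' n)
      = s i' * (s i * s i')^n := by
  rw [cs.prod_alternatingWord_eq_mul_pow]
  by_cases hn : Even n
  · obtain ⟨k, hk⟩ := hn
    rw [if_pos ⟨k, hk⟩, if_pos ⟨k, hk⟩]
    subst hk
    have hdiv : (k+k)/2 = k := by omega
    rw [hdiv, one_mul, ← inv_pow, inv_pow_mul_simple cs i i' k, mul_assoc, ← pow_add]
  · obtain ⟨k, hk⟩ := Nat.not_even_iff_odd.mp hn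
    rw [if_neg hn, if_neg hn]
    subst hk
    have hdiv : (2*k+1)/2 = k := by omega
    rw [hdiv, mul_inv_rev, ← inv_pow, cs.inv_simple]
    have hmid : s i' * s i * s i' = (s i * s i')⁻¹ * s i' := by
      rw [mul_inv_rev, cs.inv_simple, cs.inv_simple]
    calc ((s i * s i')⁻¹)^k * s i' * s i * (s i' * (s i * s i')^k)
        = ((s i * s i')⁻¹)^k * (s i' * s i * s i') * (s i * s i')^k := by group
      _ = ((s i * s i')⁻¹)^k * ((s i * s i')⁻¹ * s i') * (s i * s i')^k := by rw [hmid]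
      _ = ((s i * s i')⁻¹)^(k+1) * s i' * (s i * s i')^k := by
          simp [pow_succ, mul_assoc]
      _ = s i' * (s i * s i')^(k+1) * (s i * s i')^k := by rw [inv_pow_mul_simple]
      _ = s i' * (s i * s i')^(2*k+1) := by
          rw [mul_assoc, ← pow_add, show k+1+k = 2*k+1 from by omega]

theorem ris_alt (i i' : B) (n : ℕ) :
    ris (alternatingWord i i' n)
      = ((List.range n).reverse).map (fun k => s i' * (s i * s i')^k) := by
  induction n with
  | zero => simp [CoxeterSystem.alternatingWord]
  | succ n ih =>
    rw [alternatingWord_succ']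
    have hris : ris ((if Even n then i' else i) :: alternatingWord i i' n)
        = ((π (alternatingWord i i' n))⁻¹ * s (if Even n then i' else i)
            * π (alternatingWord i i' n)) :: ris (alternatingWord i i' n) := rfl
    rw [hris, conj_alt_prod, ih, List.range_succ, List.reverse_append]
    simp

theorem count_ris_braid_even (i i' : B) (t : W) :
    Even (List.count t (ris (alternatingWord i i' (2 * M i i')))) := by
  rw [ris_alt]
  have hperm : ((List.range (2 * M i i')).reverse.map (fun k => s i' * (s i * s i')^k)).Perm
      ((List.range (2 * M i i')).map (fun k => s i' * (s i * s i')^k)) :=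
    (List.reverse_perm _).map _
  rw [hperm.count_eq]
  have h2 : 2 * M i i' = M i i' + M i i' := by ring
  rw [h2, List.range_add, List.map_append, List.count_append]
  have : ∀ k ∈ List.range (M i i'),
      s i' * (s i * s i')^(M i i' + k) = s i' * (s i * s i')^k := by
    intro k _
    rw [pow_add, cs.simple_mul_simple_pow, one_mul]
  rw [List.map_map]
  have hmap : List.map ((fun k => s i' * (s i * s i')^k) ∘ (M i i' + ·)) (List.range (M i i'))
      = List.map (fun k => s i' * (s i * s i')^k) (List.range (M i i')) :=
    List.map_congr_left (by intro k hk; exact this k hk)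
  rw [hmap]
  exact ⟨_, rfl⟩

theorem eta_liftable : M.IsLiftable (eta cs) := by
  intro i i'
  apply Equiv.ext
  rintro ⟨t, ε⟩
  rw [← prod_map_alt (eta cs) i i' (M i i')]
  rw [Equiv.Perm.one_apply, prod_map_eta]
  have hprod : π (alternatingWord i i' (2 * M i i')) = 1 := by
    rw [cs.prod_alternatingWord_eq_mul_pow, if_pos (even_two_mul _)]
    have : 2 * M i i' / 2 = M i i' := by omega
    rw [this, one_mul, cs.simple_mul_simple_pow]
  have hcount := count_ris_braid_even cs i i' t
  rw [hprod, hcount.neg_one_pow]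
  simp

noncomputable def mu : W →* Equiv.Perm (W × ℤˣ) := cs.lift ⟨eta cs, eta_liftable cs⟩

theorem mu_simple (i : B) : mu cs (s i) = eta cs i :=
  cs.lift_apply_simple (eta_liftable cs) i

theorem mu_wordProd (ω : List B) : mu cs (π ω) = ((ω.map (eta cs)).prod) := by
  show mu cs (List.prod (ω.map cs.simple)) = _
  rw [map_list_prod (mu cs), List.map_map]
  congr 1
  apply List.map_congr_left
  intro i _
  exact mu_simple cs i

noncomputable def sgn (w : W) (t : W) : ℤˣ := (mu cs w (t, 1)).2

theorem sgn_eq_count {ω : List B} {w : W} (hω : π ω = w) (t : W) :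
    sgn cs w t = (-1 : ℤˣ)^(List.count t (ris ω)) := by
  subst hω
  show (mu cs (π ω) (t, 1)).2 = _
  rw [mu_wordProd, prod_map_eta]
  simp

theorem mu_apply (w t : W) (ε : ℤˣ) :
    mu cs w (t, ε) = (w * t * w⁻¹, sgn cs w t * ε) := by
  obtain ⟨ω, rfl⟩ := cs.wordProd_surjective w
  rw [mu_wordProd, prod_map_eta, sgn_eq_count cs rfl]

theorem sgn_mul (w₁ w₂ t : W) :
    sgn cs (w₁ * w₂) t = sgn cs w₂ t * sgn cs w₁ (w₂ * t * w₂⁻¹) := by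
  have h := congrArg (fun p => p.2) (map_mul (mu cs) w₁ w₂ ▸ (mu_apply cs (w₁ * w₂) t 1))
  have h2 : (mu cs w₁ * mu cs w₂) (t, 1) = mu cs w₁ (mu cs w₂ (t, 1)) := rfl
  rw [← map_mul] at h2
  have h3 : mu cs (w₁ * w₂) (t, 1) = mu cs w₁ (mu cs w₂ (t, 1)) := h2
  rw [mu_apply, mu_apply, mu_apply] at h3
  have := congrArg Prod.snd h3
  simpa [mul_comm] using this

theorem wordProd_palindrome (υ : List B) (i : B) :
    π (υ ++ [i] ++ υ.reverse) = π υ * s i * (π υ)⁻¹ := by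
  rw [cs.wordProd_append, cs.wordProd_append, cs.wordProd_reverse, cs.wordProd_singleton]

theorem count_palindrome_odd (υ : List B) (i : B) :
    Odd (List.count (π υ * s i * (π υ)⁻¹) (ris (υ ++ [i] ++ υ.reverse))) := by
  induction υ with
  | nil => simp
  | cons c υ ih =>
    set t₂ := π υ * s i * (π υ)⁻¹ with ht₂def
    have ht₂refl : cs.IsReflection t₂ := ⟨π υ, i, rfl⟩
    have ht₂inv : t₂⁻¹ = t₂ := ht₂refl.inv
    set γ := υ ++ [i] ++ υ.reverse with hγdef
    have hπγ : π γ = t₂ := wordProd_palindrome cs υ i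
    have hword : (c :: υ) ++ [i] ++ (c :: υ).reverse = c :: (γ ++ [c]) := by
      simp [hγdef]
    have ht : π (c :: υ) * s i * (π (c :: υ))⁻¹ = s c * t₂ * s c := by
      rw [cs.wordProd_cons, ht₂def, mul_inv_rev, cs.inv_simple]; group
    rw [hword, ht]
    have hris1 : ris (c :: (γ ++ [c]))
        = ((π (γ ++ [c]))⁻¹ * s c * π (γ ++ [c])) :: ris (γ ++ [c]) := rfl
    have hris2 : ris (γ ++ [c]) = (List.map (MulAut.conj (s c)) (ris γ)).concat (s c) := by
      rw [← List.concat_eq_append]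
      exact cs.rightInvSeq_concat γ c
    have hπγc : π (γ ++ [c]) = t₂ * s c := by
      rw [cs.wordProd_append, hπγ, cs.wordProd_singleton]
    have hhead : (π (γ ++ [c]))⁻¹ * s c * π (γ ++ [c]) = s c * t₂ * s c * (t₂ * s c) := by
      rw [hπγc, mul_inv_rev, cs.inv_simple, ht₂inv]
    have hcancel : ∀ x : W, s c * (s c * x * s c) * s c = x := by
      intro x
      rw [← mul_assoc, ← mul_assoc, cs.simple_mul_simple_self, one_mul,
        mul_assoc, cs.simple_mul_simple_self, mul_one]
    have e1 : ((π (γ ++ [c]))⁻¹ * s c * π (γ ++ [c]) = s c * t₂ * s c) ↔ (t₂ = s c) := by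
      rw [hhead, mul_eq_left, mul_eq_one_iff_eq_inv, cs.inv_simple]
    have e2 : (s c = s c * t₂ * s c) ↔ (t₂ = s c) := by
      constructor
      · intro h
        have h2 := (hcancel t₂).symm
        rw [← h] at h2
        rw [h2, cs.simple_mul_simple_self, one_mul]
      · intro h
        rw [h, cs.simple_mul_simple_self, one_mul]
    have hcount_map : List.count (s c * t₂ * s c) (List.map (MulAut.conj (s c)) (ris γ))
        = List.count t₂ (ris γ) := by
      have h : s c * t₂ * s c = MulAut.conj (s c) t₂ := by
        simp [MulAut.conj_apply, cs.inv_simple]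
      rw [h]
      exact List.count_map_of_injective _ _ (MulAut.conj (s c)).injective t₂
    rw [hris1, List.count_cons, hris2, List.concat_eq_append, List.count_append,
      hcount_map, List.count_cons, List.count_nil]
    simp only [beq_iff_eq]
    rw [Nat.odd_iff] at ih ⊢
    by_cases h : t₂ = s c
    · rw [if_pos (e1.mpr h), if_pos (e2.mpr h)]
      omega
    · rw [if_neg (fun hh => h (e1.mp hh)), if_neg (fun hh => h (e2.mp hh))]
      omega

theorem sgn_refl_self {t : W} (ht : cs.IsReflection t) : sgn cs t t = -1 := by
  obtain ⟨w, i, rfl⟩ := ht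
  obtain ⟨υ, rfl⟩ := cs.wordProd_surjective w
  rw [sgn_eq_count cs (wordProd_palindrome cs υ i)]
  exact (count_palindrome_odd cs υ i).neg_one_pow

theorem odd_count_of_sgn_neg {w t : W} {ω : List B} (hω : π ω = w)
    (h : sgn cs w t = -1) : Odd (List.count t (ris ω)) := by
  rw [sgn_eq_count cs hω] at h
  by_contra he
  rw [Nat.not_odd_iff_even] at he
  rw [he.neg_one_pow] at h
  exact absurd h (by decide)

theorem mem_ris_of_sgn_neg {w t : W} {ω : List B} (hω : π ω = w)
    (h : sgn cs w t = -1) : t ∈ ris ω := by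
  have hodd := odd_count_of_sgn_neg cs hω h
  by_contra hmem
  rw [← List.count_eq_zero] at hmem
  rw [hmem] at hodd
  simp at hodd

theorem sgn_neg_lt {t w : W} (h : sgn cs w t = -1) : ℓ (w * t) < ℓ w := by
  obtain ⟨ω, hred, hω⟩ := cs.exists_reduced_word' w
  have hmem : t ∈ ris ω := mem_ris_of_sgn_neg cs hω.symm h
  obtain ⟨j, hj, hget⟩ := List.getElem_of_mem hmem
  have hj' : j < ω.length := by
    rw [cs.length_rightInvSeq] at hj
    exact hj
  have hgd : (ris ω).getD j 1 = t := by rw [List.getD_eq_getElem _ _ hj, hget]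
  have herase := cs.wordProd_mul_getD_rightInvSeq ω j
  rw [hω]
  calc ℓ (π ω * t) = ℓ (π (ω.eraseIdx j)) := by rw [← herase, hgd]
    _ ≤ (ω.eraseIdx j).length := cs.length_wordProd_le _
    _ < ω.length := by
        have := List.length_eraseIdx_add_one hj'
        omega
    _ = ℓ (π ω) := hred.symm

theorem sgn_neg_iff {t : W} (w : W) (ht : cs.IsReflection t) :
    sgn cs w t = -1 ↔ ℓ (w * t) < ℓ w := by
  constructor
  · exact sgn_neg_lt cs
  · intro hlt
    rcases Int.units_eq_one_or (sgn cs w t) with h1 | h1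
    · exfalso
      have hsm : sgn cs (w * t) t = -1 := by
        rw [sgn_mul, ht.mul_self, one_mul, ht.inv, sgn_refl_self cs ht, h1, mul_one]
      have h2 := sgn_neg_lt cs hsm
      rw [mul_assoc, ht.mul_self, mul_one] at h2
      omega
    · exact h1

theorem right_exchange {t w : W} (ht : cs.IsReflection t) (hlt : ℓ (w * t) < ℓ w)
    {ω : List B} (hω : π ω = w) : ∃ j, j < ω.length ∧ w * t = π (ω.eraseIdx j) := by
  have hsgn : sgn cs w t = -1 := (sgn_neg_iff cs w ht).mpr hlt
  have hmem : t ∈ ris ω := mem_ris_of_sgn_neg cs hω hsgn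
  obtain ⟨j, hj, hget⟩ := List.getElem_of_mem hmem
  have hj' : j < ω.length := by
    rw [cs.length_rightInvSeq] at hj
    exact hj
  have hgd : (ris ω).getD j 1 = t := by rw [List.getD_eq_getElem _ _ hj, hget]
  refine ⟨j, hj', ?_⟩
  rw [← hω, ← hgd]
  exact cs.wordProd_mul_getD_rightInvSeq ω j

theorem left_exchange {t w : W} (ht : cs.IsReflection t) (hlt : ℓ (t * w) < ℓ w)
    {ω : List B} (hω : π ω = w) :
    ∃ j, ∃ hj : j < ω.length,
      t * w = π (ω.eraseIdx j) ∧ t = π (ω.take j) * s ω[j] * (π (ω.take j))⁻¹ := by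
  have hω' : π ω.reverse = w⁻¹ := by rw [cs.wordProd_reverse, hω]
  have hlt' : ℓ (w⁻¹ * t) < ℓ w⁻¹ := by
    have h1 : ℓ (w⁻¹ * t) = ℓ (t * w) := by
      rw [← cs.length_inv (w⁻¹ * t), mul_inv_rev, inv_inv, ht.inv]
    rw [h1, cs.length_inv]
    exact hlt
  have hsgn : sgn cs w⁻¹ t = -1 := (sgn_neg_iff cs w⁻¹ ht).mpr hlt'
  have hmemr : t ∈ ris ω.reverse := mem_ris_of_sgn_neg cs hω' hsgn
  have hmem : t ∈ lis ω := by
    have h2 := cs.rightInvSeq_reverse ω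
    rw [h2] at hmemr
    exact List.mem_reverse.mp hmemr
  obtain ⟨j, hj, hget⟩ := List.getElem_of_mem hmem
  have hj' : j < ω.length := by
    rw [cs.length_leftInvSeq] at hj
    exact hj
  have hgd : (lis ω).getD j 1 = t := by rw [List.getD_eq_getElem _ _ hj, hget]
  refine ⟨j, hj', ?_, ?_⟩
  · rw [← hω, ← hgd]
    exact cs.getD_leftInvSeq_mul_wordProd ω j
  · rw [← hgd, cs.getD_leftInvSeq ω j]
    congr 2
    rw [List.getElem?_eq_getElem hj']
    rfl

theorem exists_reduced_sublist_aux : ∀ (n : ℕ) (ω : List B), ω.length ≤ n →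
    ∃ ω', ω' <+ ω ∧ π ω' = π ω ∧ cs.IsReduced ω' := by
  intro n
  induction n with
  | zero =>
    intro ω hlen
    have hω : ω = [] := List.eq_nil_of_length_eq_zero (Nat.le_zero.mp hlen)
    subst hω
    exact ⟨[], List.Sublist.refl _, rfl, by simp [CoxeterSystem.IsReduced]⟩
  | succ n ih =>
    intro ω hlen
    by_cases hred : cs.IsReduced ω
    · exact ⟨ω, List.Sublist.refl ω, rfl, hred⟩
    rcases List.eq_nil_or_concat ω with rfl | ⟨κ, c, rfl⟩
    · exact absurd (by simp [CoxeterSystem.IsReduced]) hred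
    have hlenκ : κ.length ≤ n := by
      rw [List.length_concat] at hlen
      omega
    by_cases hκ : cs.IsReduced κ
    · rcases cs.length_mul_simple (π κ) c with h1 | h1
      · exfalso
        apply hred
        show ℓ (π (κ.concat c)) = (κ.concat c).length
        rw [cs.wordProd_concat, h1, List.length_concat, hκ]
      · have hlt : ℓ (π κ * s c) < ℓ (π κ) := by omega
        obtain ⟨j, hj, herase⟩ := right_exchange cs (cs.isReflection_simple c) hlt
          (ω := κ) rfl
        have hlen2 : (κ.eraseIdx j).length ≤ n := by
          have := List.length_eraseIdx_add_one hj
          omega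
        obtain ⟨ω', hsub, hprod, hredω'⟩ := ih (κ.eraseIdx j) hlen2
        refine ⟨ω', hsub.trans ((List.eraseIdx_sublist κ j).trans ?_), ?_, hredω'⟩
        · rw [List.concat_eq_append]
          exact List.sublist_append_left κ [c]
        · rw [hprod, ← herase, cs.wordProd_concat]
    · obtain ⟨κ', hsub, hprod, hredκ'⟩ := ih κ hlenκ
      have hne : κ' ≠ κ := by
        intro h
        rw [h] at hredκ'
        exact hκ hredκ'
      have hltκ : κ'.length < κ.length := by
        rcases Nat.lt_or_ge κ'.length κ.length with h | h
        · exact h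
        · exact absurd (hsub.eq_of_length (Nat.le_antisymm hsub.length_le h)) hne
      have hlen3 : (κ'.concat c).length ≤ n := by
        rw [List.length_concat]
        omega
      obtain ⟨ω', hsub2, hprod2, hred2⟩ := ih (κ'.concat c) hlen3
      refine ⟨ω', hsub2.trans ?_, ?_, hred2⟩
      · rw [List.concat_eq_append, List.concat_eq_append]
        exact hsub.append (List.Sublist.refl [c])
      · rw [hprod2, cs.wordProd_concat, cs.wordProd_concat, hprod]

theorem exists_reduced_sublist (ω : List B) :
    ∃ ω', ω' <+ ω ∧ π ω' = π ω ∧ cs.IsReduced ω' :=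
  exists_reduced_sublist_aux cs ω.length ω le_rfl

theorem exists_word_of_list {l : List W} (hl : ∀ g ∈ l, g ∈ Set.range cs.simple) :
    ∃ ω : List B, ω.map cs.simple = l := by
  induction l with
  | nil => exact ⟨[], rfl⟩
  | cons g l ih =>
    obtain ⟨i, hi⟩ := hl g List.mem_cons_self
    obtain ⟨ω, hω⟩ := ih (fun g' hg' => hl g' (List.mem_cons_of_mem g hg'))
    exact ⟨i :: ω, by rw [List.map_cons, hω, hi]⟩

theorem genLength_eq_length (w : W) : genLength (Set.range cs.simple) w = ℓ w := by
  have hmem : ℓ w ∈ {n | ∃ l : List W,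
      (∀ g ∈ l, g ∈ Set.range cs.simple) ∧ l.length = n ∧ l.prod = w} := by
    obtain ⟨ω, hω, hπ⟩ := cs.exists_reduced_word w
    refine ⟨ω.map cs.simple, ?_, by simp [hπ, hω.eq], by rw [hπ]; rfl⟩
    intro g hg
    obtain ⟨i, _, rfl⟩ := List.mem_map.mp hg
    exact ⟨i, rfl⟩
  apply _root_.le_antisymm
  · exact Nat.sInf_le hmem
  · obtain ⟨l, hl, hlen, hprod⟩ := Nat.sInf_mem ⟨ℓ w, hmem⟩
    obtain ⟨ω, rfl⟩ := exists_word_of_list cs hl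
    calc ℓ w = ℓ (π ω) := by rw [show π ω = w from hprod]
      _ ≤ ω.length := cs.length_wordProd_le ω
      _ = _ := by rw [genLength, ← hlen, List.length_map]

variable (J : Set B)

theorem Jword_mem_closure {ω : List B} (h : ∀ b ∈ ω, b ∈ J) :
    π ω ∈ Subgroup.closure (cs.simple '' J) := by
  induction ω with
  | nil => simp [one_mem]
  | cons c ω ih =>
    rw [cs.wordProd_cons]
    exact mul_mem (Subgroup.subset_closure ⟨c, h c List.mem_cons_self, rfl⟩)
      (ih (fun b hb => h b (List.mem_cons_of_mem c hb)))

theorem exists_Jword_of_mem_closure {w : W}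
    (hw : w ∈ Subgroup.closure (cs.simple '' J)) :
    ∃ ω : List B, (∀ b ∈ ω, b ∈ J) ∧ π ω = w := by
  induction hw using Subgroup.closure_induction with
  | mem x hx =>
    obtain ⟨i, hi, rfl⟩ := hx
    exact ⟨[i], by simpa using hi, by simp⟩
  | one => exact ⟨[], by simp, by simp⟩
  | mul x y hx hy ihx ihy =>
    obtain ⟨ω₁, h₁, hπ₁⟩ := ihx
    obtain ⟨ω₂, h₂, hπ₂⟩ := ihy
    refine ⟨ω₁ ++ ω₂, ?_, by rw [cs.wordProd_append, hπ₁, hπ₂]⟩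
    intro b hb
    rcases List.mem_append.mp hb with h | h
    · exact h₁ b h
    · exact h₂ b h
  | inv x hx ihx =>
    obtain ⟨ω, h, hπ⟩ := ihx
    exact ⟨ω.reverse, fun b hb => h b (List.mem_reverse.mp hb),
      by rw [cs.wordProd_reverse, hπ]⟩

theorem exists_reduced_Jword {w : W}
    (hw : w ∈ Subgroup.closure (cs.simple '' J)) :
    ∃ ω : List B, (∀ b ∈ ω, b ∈ J) ∧ cs.IsReduced ω ∧ π ω = w := by
  obtain ⟨ω₀, h₀, hπ₀⟩ := exists_Jword_of_mem_closure cs J hw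
  obtain ⟨ω, hsub, hπ, hred⟩ := exists_reduced_sublist cs ω₀
  exact ⟨ω, fun b hb => h₀ b (hsub.subset hb), hred, by rw [hπ, hπ₀]⟩

theorem exists_Jword_of_list {l : List W} (hl : ∀ g ∈ l, g ∈ cs.simple '' J) :
    ∃ ω : List B, (∀ b ∈ ω, b ∈ J) ∧ ω.map cs.simple = l := by
  induction l with
  | nil => exact ⟨[], by simp, rfl⟩
  | cons g l ih =>
    obtain ⟨i, hiJ, hi⟩ := hl g List.mem_cons_self
    obtain ⟨ω, hωJ, hω⟩ := ih (fun g' hg' => hl g' (List.mem_cons_of_mem g hg'))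
    refine ⟨i :: ω, ?_, by rw [List.map_cons, hω, hi]⟩
    intro b hb
    rcases List.mem_cons.mp hb with rfl | hb
    · exact hiJ
    · exact hωJ b hb

theorem genLength_J_eq_length {w : W}
    (hw : w ∈ Subgroup.closure (cs.simple '' J)) :
    genLength (cs.simple '' J) w = ℓ w := by
  obtain ⟨ρ, hρJ, hρred, hρπ⟩ := exists_reduced_Jword cs J hw
  have hmem : ℓ w ∈ {n | ∃ l : List W,
      (∀ g ∈ l, g ∈ cs.simple '' J) ∧ l.length = n ∧ l.prod = w} := by
    refine ⟨ρ.map cs.simple, ?_, ?_, by rw [← hρπ]; rfl⟩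
    · intro g hg
      obtain ⟨i, hi, rfl⟩ := List.mem_map.mp hg
      exact ⟨i, hρJ i hi, rfl⟩
    · rw [List.length_map, ← hρred, hρπ]
  apply _root_.le_antisymm
  · exact Nat.sInf_le hmem
  · obtain ⟨l, hl, hlen, hprod⟩ := Nat.sInf_mem ⟨ℓ w, hmem⟩
    obtain ⟨ω, _, rfl⟩ := exists_Jword_of_list cs J hl
    calc ℓ w = ℓ (π ω) := by rw [show π ω = w from hprod]
      _ ≤ ω.length := cs.length_wordProd_le ω
      _ = _ := by rw [genLength, ← hlen, List.length_map]

theorem genRefl_range_iff {t : W} :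
    t ∈ genReflections (Set.range cs.simple) ↔ cs.IsReflection t := by
  constructor
  · rintro ⟨u, hu, t₀, ⟨i, rfl⟩, rfl⟩
    exact ⟨u, i, rfl⟩
  · rintro ⟨w, i, rfl⟩
    exact ⟨w, by rw [cs.subgroup_closure_range_simple]; trivial, s i, ⟨i, rfl⟩, rfl⟩

theorem genRefl_J_isReflection {t : W} (h : t ∈ genReflections (cs.simple '' J)) :
    cs.IsReflection t := by
  obtain ⟨u, hu, t₀, ⟨i, hi, rfl⟩, rfl⟩ := h
  exact ⟨u, i, rfl⟩

theorem genRefl_J_mem_closure {t : W} (h : t ∈ genReflections (cs.simple '' J)) :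
    t ∈ Subgroup.closure (cs.simple '' J) := by
  obtain ⟨u, hu, t₀, ht₀, rfl⟩ := h
  exact mul_mem (mul_mem hu (Subgroup.subset_closure ht₀)) (inv_mem hu)

theorem simple_mem_closure_J {c : B} (hc : c ∈ J) :
    s c ∈ Subgroup.closure (cs.simple '' J) :=
  Subgroup.subset_closure ⟨c, hc, rfl⟩

theorem refl_mem_genRefl_J {t : W} (ht : cs.IsReflection t)
    (htW : t ∈ Subgroup.closure (cs.simple '' J)) :
    t ∈ genReflections (cs.simple '' J) := by
  obtain ⟨ρ, hρJ, hρred, hρπ⟩ := exists_reduced_Jword cs J htW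
  have hlt : ℓ (t * t) < ℓ t := by
    rw [ht.mul_self, cs.length_one]
    have := ht.odd_length
    exact Nat.pos_of_ne_zero (by rintro h; rw [h] at this; simp at this)
  obtain ⟨j, hj, _, hconj⟩ := left_exchange cs ht hlt hρπ
  refine ⟨π (ρ.take j), Jword_mem_closure cs J
    (fun b hb => hρJ b ((List.take_sublist j ρ).subset hb)), s ρ[j],
    ⟨ρ[j], hρJ _ (ρ.getElem_mem hj), rfl⟩, hconj⟩

theorem chain_mem_closure_and_le {x y : W} (h : genBruhatLE (cs.simple '' J) x y) :
    y ∈ Subgroup.closure (cs.simple '' J) →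
      x ∈ Subgroup.closure (cs.simple '' J) ∧ ℓ x ≤ ℓ y := by
  have h' : Relation.ReflTransGen _ x y := h
  clear h
  induction h' with
  | refl => exact fun hy => ⟨hy, le_rfl⟩
  | @tail b c h₁ hstep ih =>
    intro hy
    have hb : b ∈ Subgroup.closure (cs.simple '' J) := by
      have := genRefl_J_mem_closure cs J hstep.2
      have h2 : b = (b * c⁻¹) * c := by group
      rw [h2]
      exact mul_mem this hy
    have hlen : ℓ b < ℓ c := by
      have := hstep.1
      rwa [genLength_J_eq_length cs J hb, genLength_J_eq_length cs J hy] at this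
    obtain ⟨hx, hle⟩ := ih hb
    exact ⟨hx, hle.trans hlen.le⟩

theorem stepJ (x y : W) (hx : x ∈ Subgroup.closure (cs.simple '' J))
    (hy : y ∈ Subgroup.closure (cs.simple '' J)) (hl : ℓ x < ℓ y)
    (hr : x * y⁻¹ ∈ genReflections (cs.simple '' J)) :
    genBruhatLE (cs.simple '' J) x y :=
  Relation.ReflTransGen.single ⟨by
    rwa [genLength_J_eq_length cs J hx, genLength_J_eq_length cs J hy], hr⟩

/-- Any Bruhat-smaller element is the product of a sublist of any word for the
larger element. -/
theorem subword_of_le {x y : W} (h : genBruhatLE (Set.range cs.simple) x y) :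
    ∀ ω : List B, π ω = y → ∃ ω', ω' <+ ω ∧ π ω' = x := by
  have h' : Relation.ReflTransGen _ x y := h
  clear h
  induction h' with
  | refl => exact fun ω hω => ⟨ω, List.Sublist.refl _, hω⟩
  | @tail b c h₁ hstep ih =>
    intro ω hω
    have ht : cs.IsReflection (b * c⁻¹) := (genRefl_range_iff cs).mp hstep.2
    have hlen : ℓ b < ℓ c := by
      have := hstep.1
      rwa [genLength_eq_length, genLength_eq_length] at this
    have hlt : ℓ ((b * c⁻¹) * c) < ℓ c := by
      rw [inv_mul_cancel_right]
      exact hlen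
    obtain ⟨j, hj, herase, _⟩ := left_exchange cs ht hlt hω
    rw [inv_mul_cancel_right] at herase
    obtain ⟨ω', hsub, hπ⟩ := ih (ω.eraseIdx j) herase.symm
    exact ⟨ω', hsub.trans (List.eraseIdx_sublist ω j), hπ⟩

/-- Deodhar's property Z, disjunctive form, relative to a parabolic. -/
theorem propertyZ {u v : W} (h : genBruhatLE (cs.simple '' J) u v) (c : B) (hc : c ∈ J) :
    v ∈ Subgroup.closure (cs.simple '' J) →
      genBruhatLE (cs.simple '' J) (u * s c) v ∨
      genBruhatLE (cs.simple '' J) (u * s c) (v * s c) := by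
  have h' : Relation.ReflTransGen _ u v := h
  clear h
  induction h' with
  | refl => exact fun _ => Or.inr Relation.ReflTransGen.refl
  | @tail z v h₁ hstep ih =>
    intro hv
    have htR : z * v⁻¹ ∈ genReflections (cs.simple '' J) := hstep.2
    have htrefl : cs.IsReflection (z * v⁻¹) := genRefl_J_isReflection cs J htR
    have hz : z ∈ Subgroup.closure (cs.simple '' J) := by
      have h2 : z = (z * v⁻¹) * v := by group
      rw [h2]
      exact mul_mem (genRefl_J_mem_closure cs J htR) hv
    have hℓ : ℓ z < ℓ v := by
      have := hstep.1
      rwa [genLength_J_eq_length cs J hz, genLength_J_eq_length cs J hv] at this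
    have hpar : ℓ z % 2 ≠ ℓ v % 2 := by
      have h2 : (z * v⁻¹) * v = z := by group
      have h3 := cs.length_mul_mod_two (z * v⁻¹) v
      rw [h2] at h3
      have h4 := htrefl.odd_length
      rw [Nat.odd_iff] at h4
      omega
    rcases ih hz with ihA | ihB
    · exact Or.inl (Relation.ReflTransGen.tail ihA hstep)
    · -- ihB : u * s c ≤ z * s c
      have hsc : s c ∈ Subgroup.closure (cs.simple '' J) := simple_mem_closure_J cs J hc
      have hzs : z * s c ∈ Subgroup.closure (cs.simple '' J) := mul_mem hz hsc
      have hvs : v * s c ∈ Subgroup.closure (cs.simple '' J) := mul_mem hv hsc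
      have hdz := cs.length_mul_simple z c
      have hdv := cs.length_mul_simple v c
      by_cases hlt : ℓ (z * s c) < ℓ (v * s c)
      · refine Or.inr (Relation.ReflTransGen.tail ihB ?_)
        refine ⟨by rwa [genLength_J_eq_length cs J hzs, genLength_J_eq_length cs J hvs], ?_⟩
        have hq : (z * s c) * (v * s c)⁻¹ = z * v⁻¹ := by group
        rw [hq]
        exact htR
      · -- forced configuration
        have hz1 : ℓ (z * s c) = ℓ z + 1 := by omega
        have hv1 : ℓ (v * s c) + 1 = ℓ v := by omega
        have hzv : ℓ z + 1 = ℓ v := by omega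
        obtain ⟨α, hαJ, hαred, hαπ⟩ := exists_reduced_Jword cs J hvs
        have hωπ : π (α ++ [c]) = v := by
          rw [cs.wordProd_append, hαπ, cs.wordProd_singleton,
            cs.simple_mul_simple_cancel_right]
        have hαlen : α.length + 1 = ℓ v := by
          rw [← hv1, ← hαπ, hαred]
        have hltv : ℓ ((z * v⁻¹) * v) < ℓ v := by rw [inv_mul_cancel_right]; exact hℓ
        obtain ⟨j, hj, herase, _⟩ := left_exchange cs htrefl hltv hωπ
        rw [inv_mul_cancel_right] at herase
        by_cases hj2 : j < α.length
        · exfalso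
          rw [List.eraseIdx_append_of_lt_length hj2 [c]] at herase
          have hzsc : z * s c = π (α.eraseIdx j) := by
            rw [herase, cs.wordProd_append, cs.wordProd_singleton,
              cs.simple_mul_simple_cancel_right]
          have hb1 : ℓ (z * s c) ≤ (α.eraseIdx j).length := by
            rw [hzsc]; exact cs.length_wordProd_le _
          have hb2 := List.length_eraseIdx_add_one hj2
          omega
        · have hj3 : α.length ≤ j := Nat.le_of_not_lt hj2
          rw [List.eraseIdx_append_of_length_le hj3 [c]] at herase
          have hj4 : j - α.length = 0 := by
            simp only [List.length_append, List.length_singleton] at hj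
            omega
          rw [hj4] at herase
          have herase2 : z = π α := by simpa using herase
          have hzsv : z * s c = v := by
            rw [herase2, hαπ, cs.simple_mul_simple_cancel_right]
          rw [hzsv] at ihB
          exact Or.inl ihB

/-- The subword property: a sublist of a reduced `J`-word is Bruhat-below it,
in the parabolic order. -/
theorem subword_le_J : ∀ ω : List B, (∀ b ∈ ω, b ∈ J) → cs.IsReduced ω →
    ∀ ω', ω' <+ ω → genBruhatLE (cs.simple '' J) (π ω') (π ω) := by
  intro ω
  induction ω using List.reverseRecOn with
  | nil =>
    intro _ _ ω' hsub
    rw [List.sublist_nil.mp hsub]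
    exact Relation.ReflTransGen.refl
  | append_singleton κ c ih =>
    intro hJ hred ω' hsub
    have hκJ : ∀ b ∈ κ, b ∈ J := fun b hb => hJ b (List.mem_append_left [c] hb)
    have hcJ : c ∈ J := hJ c (List.mem_append_right κ (List.mem_singleton_self c))
    have hκred : cs.IsReduced κ := by
      have h2 := hred.take κ.length
      rwa [List.take_left] at h2
    have hπω : π (κ ++ [c]) = π κ * s c := by
      rw [cs.wordProd_append, cs.wordProd_singleton]
    have hκmem := Jword_mem_closure cs J hκJ
    have hωmem := Jword_mem_closure cs J hJ
    have hlenκ : ℓ (π κ) = κ.length := hκred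
    have hlenω : ℓ (π (κ ++ [c])) = κ.length + 1 := by
      rw [hred, List.length_append, List.length_singleton]
    have hstep : genBruhatLE (cs.simple '' J) (π κ) (π (κ ++ [c])) := by
      refine stepJ cs J _ _ hκmem hωmem (by omega) ?_
      refine ⟨π κ, hκmem, s c, ⟨c, hcJ, rfl⟩, ?_⟩
      rw [hπω, mul_inv_rev, cs.inv_simple, ← mul_assoc]
    obtain ⟨l₁, l₂, rfl, hsub1, hsub2⟩ := List.sublist_append_iff.mp hsub
    rcases List.sublist_singleton.mp hsub2 with rfl | rfl
    · rw [List.append_nil]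
      exact Relation.ReflTransGen.trans (ih hκJ hκred l₁ hsub1) hstep
    · have hord := ih hκJ hκred l₁ hsub1
      have hπω' : π (l₁ ++ [c]) = π l₁ * s c := by
        rw [cs.wordProd_append, cs.wordProd_singleton]
      rcases propertyZ cs J hord c hcJ hκmem with hA | hB
      · rw [hπω']
        exact Relation.ReflTransGen.trans hA hstep
      · rw [hπω', hπω]
        exact hB

theorem ordJ_imp_ord {x y : W} (h : genBruhatLE (cs.simple '' J) x y) :
    y ∈ Subgroup.closure (cs.simple '' J) → genBruhatLE (Set.range cs.simple) x y := by
  have h' : Relation.ReflTransGen _ x y := h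
  clear h
  induction h' with
  | refl => exact fun _ => Relation.ReflTransGen.refl
  | @tail b c h₁ hstep ih =>
    intro hy
    have hb : b ∈ Subgroup.closure (cs.simple '' J) := by
      have h2 : b = (b * c⁻¹) * c := by group
      rw [h2]
      exact mul_mem (genRefl_J_mem_closure cs J hstep.2) hy
    have hlen : ℓ b < ℓ c := by
      have := hstep.1
      rwa [genLength_J_eq_length cs J hb, genLength_J_eq_length cs J hy] at this
    refine Relation.ReflTransGen.tail (ih hb) ?_
    refine ⟨by rwa [genLength_eq_length, genLength_eq_length], ?_⟩
    exact (genRefl_range_iff cs).mpr (genRefl_J_isReflection cs J hstep.2)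

theorem ord_imp_ordJ {x y : W} (h : genBruhatLE (Set.range cs.simple) x y)
    (hy : y ∈ Subgroup.closure (cs.simple '' J)) :
    genBruhatLE (cs.simple '' J) x y := by
  obtain ⟨ω, hJw, hred, hπ⟩ := exists_reduced_Jword cs J hy
  obtain ⟨ω', hsub, hπ'⟩ := subword_of_le cs h ω hπ
  have h2 := subword_le_J cs J ω hJw hred ω' hsub
  rwa [hπ', hπ] at h2

theorem length_add_of_min {x₀ : W}
    (hmin : ∀ a ∈ Subgroup.closure (cs.simple '' J), ℓ x₀ ≤ ℓ (a * x₀)) :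
    ∀ n a, a ∈ Subgroup.closure (cs.simple '' J) → ℓ a ≤ n →
      ℓ (a * x₀) = ℓ a + ℓ x₀ := by
  intro n
  induction n with
  | zero =>
    intro a _ hlen
    have h1 : a = 1 := cs.length_eq_zero_iff.mp (Nat.le_zero.mp hlen)
    subst h1
    simp
  | succ n ihn =>
    intro a ha hlen
    by_cases ha1 : a = 1
    · subst ha1; simp
    obtain ⟨ω, hωJ, hωred, hωπ⟩ := exists_reduced_Jword cs J ha
    obtain ⟨c, κ, rfl⟩ : ∃ c κ, ω = c :: κ := by
      cases ω with
      | nil => exact absurd (by rw [← hωπ]; simp) ha1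
      | cons c κ => exact ⟨c, κ, rfl⟩
    have hκred : cs.IsReduced κ := by
      have h2 := hωred.drop (j := 1)
      simpa using h2
    have hκJ : ∀ b ∈ κ, b ∈ J := fun b hb => hωJ b (List.mem_cons_of_mem c hb)
    have ha' : π κ ∈ Subgroup.closure (cs.simple '' J) := Jword_mem_closure cs J hκJ
    have hacons : a = s c * π κ := by rw [← hωπ, cs.wordProd_cons]
    have hℓa : ℓ a = κ.length + 1 := by
      rw [← hωπ, hωred]
      simp
    have hℓκ : ℓ (π κ) = κ.length := hκred
    have hIH : ℓ (π κ * x₀) = κ.length + ℓ x₀ := by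
      rw [ihn (π κ) ha' (by omega), hℓκ]
    rcases cs.length_simple_mul (π κ * x₀) c with hup | hdown
    · rw [hacons, mul_assoc, hup, hIH, ← hacons, hℓa]
      omega
    · exfalso
      obtain ⟨ρ, hρred, hρπ⟩ := cs.exists_reduced_word' x₀
      have hπκρ : π (κ ++ ρ) = π κ * x₀ := by rw [cs.wordProd_append, ← hρπ]
      have hlt : ℓ (s c * (π κ * x₀)) < ℓ (π κ * x₀) := by omega
      obtain ⟨j, hj, herase, _⟩ := left_exchange cs (cs.isReflection_simple c) hlt hπκρ
      rw [List.length_append] at hj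
      by_cases hj2 : j < κ.length
      · rw [List.eraseIdx_append_of_lt_length hj2 ρ] at herase
        have h3 : s c * (π κ * x₀) = π (κ.eraseIdx j) * x₀ := by
          rw [herase, cs.wordProd_append, ← hρπ]
        have h4 : a * x₀ = π (κ.eraseIdx j) * x₀ := by
          rw [hacons, mul_assoc, h3]
        have h5 : a = π (κ.eraseIdx j) := mul_right_cancel h4
        have h6 : ℓ a ≤ (κ.eraseIdx j).length := h5 ▸ cs.length_wordProd_le _
        have h7 := List.length_eraseIdx_add_one hj2
        omega
      · have hj3 : κ.length ≤ j := Nat.le_of_not_lt hj2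
        rw [List.eraseIdx_append_of_length_le hj3 ρ] at herase
        have hjρ : j - κ.length < ρ.length := by omega
        have h3 : a * x₀ = π κ * π (ρ.eraseIdx (j - κ.length)) := by
          rw [hacons, mul_assoc, herase, cs.wordProd_append]
        have h4 : π (ρ.eraseIdx (j - κ.length)) = ((π κ)⁻¹ * a) * x₀ := by
          rw [mul_assoc, h3]
          group
        have h5 : ℓ (((π κ)⁻¹ * a) * x₀) ≤ (ρ.eraseIdx (j - κ.length)).length := by
          rw [← h4]
          exact cs.length_wordProd_le _
        have h6 := List.length_eraseIdx_add_one hjρ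
        have h7 : ρ.length = ℓ x₀ := by rw [← hρred, ← hρπ]
        have h8 := hmin ((π κ)⁻¹ * a) (mul_mem (inv_mem ha') ha)
        omega

theorem coset_key {x₀ a b : W}
    (hmin : ∀ g ∈ Subgroup.closure (cs.simple '' J), ℓ x₀ ≤ ℓ (g * x₀))
    (ha : a ∈ Subgroup.closure (cs.simple '' J))
    (hb : b ∈ Subgroup.closure (cs.simple '' J))
    (h : genBruhatLE (Set.range cs.simple) (a * x₀) (b * x₀)) :
    genBruhatLE (cs.simple '' J) a b := by
  obtain ⟨β, hβJ, hβred, hβπ⟩ := exists_reduced_Jword cs J hb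
  obtain ⟨ρ, hρred, hρπ⟩ := cs.exists_reduced_word' x₀
  have hω : π (β ++ ρ) = b * x₀ := by rw [cs.wordProd_append, hβπ, ← hρπ]
  obtain ⟨ω', hsub, hπ'⟩ := subword_of_le cs h (β ++ ρ) hω
  obtain ⟨l₁, l₂, rfl, hsub1, hsub2⟩ := List.sublist_append_iff.mp hsub
  have hl₁mem : π l₁ ∈ Subgroup.closure (cs.simple '' J) :=
    Jword_mem_closure cs J (fun b hb' => hβJ b (hsub1.subset hb'))
  have hπ'2 : π l₁ * π l₂ = a * x₀ := by rw [← cs.wordProd_append]; exact hπ'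
  have h4 : π l₂ = ((π l₁)⁻¹ * a) * x₀ := by rw [mul_assoc, ← hπ'2]; group
  have h5 : ℓ x₀ ≤ ℓ (π l₂) := by
    rw [h4]
    exact hmin _ (mul_mem (inv_mem hl₁mem) ha)
  have h6 : ℓ (π l₂) ≤ l₂.length := cs.length_wordProd_le _
  have h7 : l₂.length ≤ ρ.length := hsub2.length_le
  have h8 : ρ.length = ℓ x₀ := by rw [← hρred, ← hρπ]
  have h9 : l₂ = ρ := hsub2.eq_of_length (by omega)
  have h10 : a = π l₁ := by
    apply mul_right_cancel (b := x₀)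
    rw [← hπ'2, h9, ← hρπ]
  have h11 := subword_le_J cs J β hβJ hβred l₁ hsub1
  rwa [← h10, hβπ] at h11

end CoxAux

def IsKLFamily (T : Set W) (P : W → W → Polynomial ℤ) : Prop :=
  ∃ R : W → W → Polynomial ℤ,
    (∀ x w, ¬ genBruhatLE T x w → R x w = 0) ∧
    (∀ w, R w w = 1) ∧
    (∀ s ∈ T, ∀ x w : W, genLength T (s * w) < genLength T w →
      (genLength T (s * x) < genLength T x → R x w = R (s * x) (s * w)) ∧
      (genLength T x < genLength T (s * x) →
        R x w = (Polynomial.X - 1) * R x (s * w) + Polynomial.X * R (s * x) (s * w))) ∧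
    (∀ x w, ¬ genBruhatLE T x w → P x w = 0) ∧
    (∀ w, P w w = 1) ∧
    (∀ x w, genBruhatLE T x w → x ≠ w →
      2 * (P x w).natDegree < genLength T w - genLength T x) ∧
    (∀ x w, genBruhatLE T x w →
      Polynomial.reflect (genLength T w - genLength T x) (P x w) =
        ∑ᶠ y ∈ {y | genBruhatLE T x y ∧ genBruhatLE T y w}, R x y * P y w)

def IsPatternMap (S : Set W) (W' : Subgroup W) (S' : Set W) (φ : W → W) : Prop :=
  (∀ x, φ x ∈ W') ∧
  (∀ w ∈ W', ∀ x, φ (w * x) = w * φ x) ∧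
  (∀ x : W, ∀ w ∈ W', genBruhatLE S' (φ x) (φ (w * x)) → genBruhatLE S x (w * x))

def CoxeterMatrix.IsCrystallographic {B : Type*} (M : CoxeterMatrix B) : Prop :=
  ∀ i j, i ≠ j → M i j ∈ ({2, 3, 4, 6} : Set ℕ)

/-- Let `(W,S)` be a finite Coxeter system and `W' = W_I` a standard
parabolic subgroup, `I ⊆ S`.  Then the length function of `(W_I, I)` is the restriction
to `W_I` of the length function of `W`, the Bruhat–Chevalley order of `(W_I, I)` is the
restriction to `W_I` of the Bruhat–Chevalley order of `W`, and the pattern map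
`φ : W → W_I` satisfies: for all `x ∈ W` and `w ∈ W_I`,
`φ(x) ≤' φ(wx)` if and only if `x ≤ wx`. -/
theorem statement3 {B : Type*} {M : CoxeterMatrix B} (cs : CoxeterSystem M W)
    [Finite W]
    (S : Set W) (hS : S = Set.range cs.simple)
    (I : Set B) (S' : Set W) (hS' : S' = cs.simple '' I)
    (W' : Subgroup W) (hW' : W' = Subgroup.closure S') :
    (∀ w ∈ W', genLength S' w = genLength S w) ∧
    (∀ x ∈ W', ∀ y ∈ W', (genBruhatLE S' x y ↔ genBruhatLE S x y)) ∧
    (∀ φ : W → W, IsPatternMap S W' S' φ →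
      ∀ x : W, ∀ w ∈ W', (genBruhatLE S' (φ x) (φ (w * x)) ↔ genBruhatLE S x (w * x))) := by
  subst hS hS' hW'
  refine ⟨?_, ?_, ?_⟩
  · intro w hw
    rw [CoxAux.genLength_J_eq_length cs I hw, CoxAux.genLength_eq_length cs w]
  · intro x _ y hy
    exact ⟨fun h => CoxAux.ordJ_imp_ord cs I h hy, fun h => CoxAux.ord_imp_ordJ cs I h hy⟩
  · intro φ hφ x w hw
    obtain ⟨hφmem, hφeq, hφord⟩ := hφ
    refine ⟨fun h => hφord x w hw h, fun h => ?_⟩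
    have hne : Set.Nonempty {n | ∃ a, a ∈ Subgroup.closure (cs.simple '' I) ∧
        n = cs.length (a * x)} := ⟨cs.length x, 1, one_mem _, by simp⟩
    obtain ⟨a₀, ha₀, ha₀len⟩ := Nat.sInf_mem hne
    have hmin : ∀ g ∈ Subgroup.closure (cs.simple '' I),
        cs.length (a₀ * x) ≤ cs.length (g * (a₀ * x)) := by
      intro g hg
      have hmem : cs.length (g * (a₀ * x)) ∈ {n | ∃ a,
          a ∈ Subgroup.closure (cs.simple '' I) ∧ n = cs.length (a * x)} :=
        ⟨g * a₀, mul_mem hg ha₀, by rw [mul_assoc]⟩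
      have h2 := Nat.sInf_le hmem
      omega
    have hu : x = a₀⁻¹ * (a₀ * x) := by group
    have hkey : genBruhatLE (cs.simple '' I) (a₀⁻¹) (w * a₀⁻¹) := by
      apply CoxAux.coset_key cs I hmin (inv_mem ha₀) (mul_mem hw (inv_mem ha₀))
      have e1 : a₀⁻¹ * (a₀ * x) = x := hu.symm
      have e2 : (w * a₀⁻¹) * (a₀ * x) = w * x := by group
      rw [e1, e2]
      exact h
    have hφx : φ x = a₀⁻¹ * φ (a₀ * x) := by
      nth_rewrite 1 [hu]
      exact hφeq _ (inv_mem ha₀) _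
    have hφwx : φ (w * x) = (w * a₀⁻¹) * φ (a₀ * x) := by
      have e : w * x = (w * a₀⁻¹) * (a₀ * x) := by group
      rw [e]
      exact hφeq _ (mul_mem hw (inv_mem ha₀)) _
    have hg₀mem : φ (a₀ * x) ∈ Subgroup.closure (cs.simple '' I) := hφmem (a₀ * x)
    have reflect : ∀ a b : W, a ∈ Subgroup.closure (cs.simple '' I) →
        b ∈ Subgroup.closure (cs.simple '' I) →
        genBruhatLE (cs.simple '' I) (a * φ (a₀ * x)) (b * φ (a₀ * x)) →
        genBruhatLE (cs.simple '' I) a b := by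
      intro a b haI hbI hab
      have h1 : φ (a * (a₀ * x)) = a * φ (a₀ * x) := hφeq a haI _
      have h2 : (b * a⁻¹) * (a * (a₀ * x)) = b * (a₀ * x) := by group
      have h3 : φ ((b * a⁻¹) * (a * (a₀ * x))) = b * φ (a₀ * x) := by
        rw [h2]
        exact hφeq b hbI _
      have h4 := hφord (a * (a₀ * x)) (b * a⁻¹) (mul_mem hbI (inv_mem haI))
        (by rw [h1, h3]; exact hab)
      rw [h2] at h4
      exact CoxAux.coset_key cs I hmin haI hbI h4
    have iterate : ∀ n : ℕ, ∀ a b : W, a ∈ Subgroup.closure (cs.simple '' I) →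
        b ∈ Subgroup.closure (cs.simple '' I) →
        genBruhatLE (cs.simple '' I) (a * φ (a₀ * x) ^ n) (b * φ (a₀ * x) ^ n) →
        genBruhatLE (cs.simple '' I) a b := by
      intro n
      induction n with
      | zero => intro a b _ _ hh; simpa using hh
      | succ n ihn =>
        intro a b haI hbI hh
        have e : ∀ y : W, y * φ (a₀ * x) ^ (n+1) = (y * φ (a₀ * x)) * φ (a₀ * x) ^ n := by
          intro y
          rw [pow_succ']
          group
        rw [e a, e b] at hh
        exact reflect a b haI hbI
          (ihn (a * φ (a₀ * x)) (b * φ (a₀ * x)) (mul_mem haI hg₀mem)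
            (mul_mem hbI hg₀mem) hh)
    have hordpow : φ (a₀ * x) ^ (orderOf (φ (a₀ * x))) = 1 := pow_orderOf_eq_one _
    have hpos : 0 < orderOf (φ (a₀ * x)) := orderOf_pos _
    rw [hφx, hφwx]
    apply iterate (orderOf (φ (a₀ * x)) - 1) _ _
      (mul_mem (inv_mem ha₀) hg₀mem) (mul_mem (mul_mem hw (inv_mem ha₀)) hg₀mem)
    have e : ∀ y : W, (y * φ (a₀ * x)) * φ (a₀ * x) ^ (orderOf (φ (a₀ * x)) - 1) = y := by
      intro y
      rw [mul_assoc, ← pow_succ',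
        show orderOf (φ (a₀ * x)) - 1 + 1 = orderOf (φ (a₀ * x)) from by omega,
        hordpow, mul_one]
    rw [e, e]
    exact hkey
end

section
/- Let (W,S) be a finite Coxeter system and W' ⊆ W a parabolic subgroup. Then for every x ∈ W, the right coset W'x contains a unique element z such that z ≤ wz for all w ∈ W' (namely the unique element of W'x with φ(z) = 1, where φ is the pattern map); in particular z is the unique minimal element of W'x in the Bruhat–Chevalley order of W. -/
open Polynomial

variable {W : Type*} [Group W]

private lemma aux_prod_reverse {T : Set W} (hT : ∀ t ∈ T, t * t = 1) :
    ∀ l : List W, (∀ g ∈ l, g ∈ T) → l.reverse.prod = l.prod⁻¹ := by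
  intro l
  induction l with
  | nil => simp
  | cons a l ih =>
    intro h
    have ha : a⁻¹ = a := by
      rw [inv_eq_iff_mul_eq_one]; exact hT a (h a (by simp))
    simp only [List.reverse_cons, List.prod_append, List.prod_cons, List.prod_nil, mul_one,
      mul_inv_rev, ha]
    rw [ih (fun g hg => h g (by simp [hg]))]

private lemma aux_exists_list {T : Set W} (hT : ∀ t ∈ T, t * t = 1) {w : W}
    (hw : w ∈ Subgroup.closure T) :
    ∃ l : List W, (∀ g ∈ l, g ∈ T) ∧ l.prod = w := by
  induction hw using Subgroup.closure_induction with
  | mem t ht => exact ⟨[t], by simp [ht]⟩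
  | one => exact ⟨[], by simp⟩
  | mul a b _ _ ha hb =>
    obtain ⟨la, hla, ra⟩ := ha
    obtain ⟨lb, hlb, rb⟩ := hb
    refine ⟨la ++ lb, ?_, by rw [List.prod_append, ra, rb]⟩
    intro g hg
    rcases List.mem_append.mp hg with h | h
    exacts [hla g h, hlb g h]
  | inv a _ ha =>
    obtain ⟨la, hla, ra⟩ := ha
    exact ⟨la.reverse, fun g hg => hla g (List.mem_reverse.mp hg),
      by rw [aux_prod_reverse hT la hla, ra]⟩

private lemma aux_one_le {T : Set W} (hT : ∀ t ∈ T, t * t = 1) :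
    ∀ n, ∀ w : W, w ∈ Subgroup.closure T → genLength T w = n → genBruhatLE T 1 w := by
  intro n
  induction n using Nat.strong_induction_on with
  | _ n ih =>
    intro w hw hn
    obtain ⟨l0, hl0, hp0⟩ := aux_exists_list hT hw
    have hne : {m | ∃ l : List W, (∀ g ∈ l, g ∈ T) ∧ l.length = m ∧ l.prod = w}.Nonempty :=
      ⟨l0.length, l0, hl0, rfl, hp0⟩
    have hmem : genLength T w ∈
        {m | ∃ l : List W, (∀ g ∈ l, g ∈ T) ∧ l.length = m ∧ l.prod = w} :=
      Nat.sInf_mem hne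
    obtain ⟨l, hl, hlen, hprod⟩ := hmem
    rcases l.eq_nil_or_concat with rfl | ⟨l', t, rfl⟩
    · have : w = 1 := by simpa using hprod.symm
      rw [this]
      exact Relation.ReflTransGen.refl
    · have ht : t ∈ T := hl t (by simp)
      have hl' : ∀ g ∈ l', g ∈ T := fun g hg => hl g (by simp [hg])
      set w' := l'.prod with hw'def
      have hww : w = w' * t := by
        rw [← hprod, List.concat_eq_append, List.prod_append, List.prod_cons, List.prod_nil, mul_one]
      have hw'cl : w' ∈ Subgroup.closure T :=
        list_prod_mem (fun g hg => Subgroup.subset_closure (hl' g hg))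
      have hlenlt : genLength T w' < genLength T w := by
        have h1 : genLength T w' ≤ l'.length := Nat.sInf_le ⟨l', hl', rfl, rfl⟩
        have h2 : l'.length < genLength T w := by
          rw [← hlen]; simp
        omega
      have h1 : genBruhatLE T 1 w' :=
        ih (genLength T w') (by omega) w' hw'cl rfl
      refine h1.tail ⟨hlenlt, ?_⟩
      have htinv : t⁻¹ = t := by rw [inv_eq_iff_mul_eq_one]; exact hT t ht
      exact ⟨w', hw'cl, t, ht, by rw [hww, mul_inv_rev, htinv, mul_assoc]⟩

private lemma aux_le_len {T : Set W} {a b : W} (h : genBruhatLE T a b) :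
    a = b ∨ genLength T a < genLength T b := by
  induction h with
  | refl => exact Or.inl rfl
  | tail _ step ih =>
    right
    rcases ih with rfl | lt
    · exact step.1
    · exact lt.trans step.1

private lemma aux_antisymm {T : Set W} {a b : W} (h1 : genBruhatLE T a b)
    (h2 : genBruhatLE T b a) : a = b := by
  rcases aux_le_len h1 with rfl | l1
  · rfl
  rcases aux_le_len h2 with rfl | l2
  · rfl
  omega

/-- Let `(W,S)` be a finite Coxeter system and `W' = g W_I g⁻¹` a
parabolic subgroup with pattern map `φ`.  Then for every `x ∈ W`, the right coset `W'x`
contains a unique element `z` with `z ≤ wz` for all `w ∈ W'`; it is the unique element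
of `W'x` with `φ(z) = 1`, and it is the unique minimal element of `W'x` in the
Bruhat–Chevalley order of `W`. -/
theorem statement4 {B : Type*} {M : CoxeterMatrix B} (cs : CoxeterSystem M W)
    [Finite W]
    (S : Set W) (hS : S = Set.range cs.simple)
    (I : Set B) (g : W) (S' : Set W)
    (hS' : S' = (fun t => g * t * g⁻¹) '' (cs.simple '' I))
    (W' : Subgroup W) (hW' : W' = Subgroup.closure S')
    (φ : W → W) (hφ : IsPatternMap S W' S' φ)
    (x : W) :
    ∃ z : W, z * x⁻¹ ∈ W' ∧ (∀ w ∈ W', genBruhatLE S z (w * z)) ∧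
      (∀ z' : W, z' * x⁻¹ ∈ W' ∧ (∀ w ∈ W', genBruhatLE S z' (w * z')) → z' = z) ∧
      φ z = 1 ∧ (∀ z' : W, z' * x⁻¹ ∈ W' → φ z' = 1 → z' = z) ∧
      (∀ z' : W, z' * x⁻¹ ∈ W' → genBruhatLE S z z') ∧
      (∀ z' : W, z' * x⁻¹ ∈ W' → (∀ z'' : W, z'' * x⁻¹ ∈ W' → genBruhatLE S z' z'') →
        z' = z) := by
  obtain ⟨hmem, heq, hpat⟩ := hφ
  have hT' : ∀ t ∈ S', t * t = 1 := by
    rintro t ht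
    rw [hS'] at ht
    obtain ⟨s, ⟨i, _, rfl⟩, rfl⟩ := ht
    have : cs.simple i * cs.simple i = 1 := cs.simple_mul_simple_self i
    simp only []
    calc g * cs.simple i * g⁻¹ * (g * cs.simple i * g⁻¹)
        = g * (cs.simple i * cs.simple i) * g⁻¹ := by group
      _ = 1 := by rw [this]; group
  set z := (φ x)⁻¹ * x with hzdef
  have hφx : φ x ∈ W' := hmem x
  have hzx : z * x⁻¹ ∈ W' := by
    have : z * x⁻¹ = (φ x)⁻¹ := by rw [hzdef]; group
    rw [this]; exact inv_mem hφx
  have hφz : φ z = 1 := by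
    have h1 : φ ((φ x) * z) = (φ x) * φ z := heq (φ x) hφx z
    have h2 : (φ x) * z = x := by rw [hzdef]; group
    rw [h2] at h1
    exact (mul_left_cancel (a := φ x) (by rw [← h1, mul_one])).symm
  have hmain : ∀ w ∈ W', genBruhatLE S z (w * z) := by
    intro w hw
    apply hpat z w hw
    have : φ (w * z) = w := by rw [heq w hw z, hφz, mul_one]
    rw [this, hφz]
    exact aux_one_le hT' (genLength S' w) w (hW' ▸ hw) rfl
  have hmin : ∀ z' : W, z' * x⁻¹ ∈ W' → genBruhatLE S z z' := by
    intro z' hz'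
    have hu : z' * z⁻¹ ∈ W' := by
      have : z' * z⁻¹ = (z' * x⁻¹) * (z * x⁻¹)⁻¹ := by group
      rw [this]; exact mul_mem hz' (inv_mem hzx)
    have := hmain (z' * z⁻¹) hu
    simpa using this
  refine ⟨z, hzx, hmain, ?_, hφz, ?_, hmin, ?_⟩
  · rintro z' ⟨hz'x, hz'min⟩
    have h1 : genBruhatLE S z z' := hmin z' hz'x
    have hv : z * z'⁻¹ ∈ W' := by
      have : z * z'⁻¹ = (z * x⁻¹) * (z' * x⁻¹)⁻¹ := by group
      rw [this]; exact mul_mem hzx (inv_mem hz'x)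
    have h2 : genBruhatLE S z' z := by
      have := hz'min (z * z'⁻¹) hv
      simpa using this
    exact aux_antisymm h2 h1
  · intro z' hz'x hφz'
    have hu : z' * z⁻¹ ∈ W' := by
      have : z' * z⁻¹ = (z' * x⁻¹) * (z * x⁻¹)⁻¹ := by group
      rw [this]; exact mul_mem hz'x (inv_mem hzx)
    have h1 : φ ((z' * z⁻¹) * z) = (z' * z⁻¹) * φ z := heq _ hu z
    have h2 : (z' * z⁻¹) * z = z' := by group
    rw [h2, hφz', hφz, mul_one] at h1
    have : z' * z⁻¹ = 1 := h1.symm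
    calc z' = (z' * z⁻¹) * z := by group
      _ = z := by rw [this, one_mul]
  · intro z' hz'x hz'min
    exact aux_antisymm (hz'min z hzx) (hmin z' hz'x)
end

section
/- Let v, w ∈ 𝔖_n be permutations with v_i = w_i for some index i, and let v̂, ŵ be the sequences obtained by deleting the i-th entry of v and w respectively. Then v ≤ w in the Bruhat–Chevalley order of 𝔖_n if and only if fl(v̂) ≤ fl(ŵ) in the Bruhat–Chevalley order of 𝔖_{n−1}. -/
/-- The number of inversions (the Coxeter length) of a permutation of `Fin m`. -/
def invCount {m : ℕ} (w : Equiv.Perm (Fin m)) : ℕ :=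
  (Finset.univ.filter (fun p : Fin m × Fin m => p.1 < p.2 ∧ w p.2 < w p.1)).card

/-- `t` is a transposition. -/
def IsTransposition {m : ℕ} (t : Equiv.Perm (Fin m)) : Prop :=
  ∃ i j : Fin m, i ≠ j ∧ t = Equiv.swap i j

/-- The Bruhat–Chevalley order on the symmetric group `𝔖_m = Perm (Fin m)`: the partial
order generated by `x < y` whenever `l(x) < l(y)` and `x * y⁻¹` is a transposition. -/
def permBruhatLE {m : ℕ} : Equiv.Perm (Fin m) → Equiv.Perm (Fin m) → Prop :=
  Relation.ReflTransGen
    (fun x y => invCount x < invCount y ∧ IsTransposition (x * y⁻¹))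

namespace S8
open Finset Equiv

variable {N : ℕ}

def R (x : Equiv.Perm (Fin N)) (K J : ℕ) : ℕ :=
  ∑ m : Fin N, if (m : ℕ) < K ∧ J ≤ (x m : ℕ) then 1 else 0

def Dom (x y : Equiv.Perm (Fin N)) : Prop := ∀ K J : ℕ, R x K J ≤ R y K J

lemma Dom.refl (x : Equiv.Perm (Fin N)) : Dom x x := fun _ _ => le_rfl

lemma Dom.trans {x y z : Equiv.Perm (Fin N)} (h1 : Dom x y) (h2 : Dom y z) : Dom x z :=
  fun K J => (h1 K J).trans (h2 K J)

/-- split the sum at the three indices p, q -/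
lemma sum_split_two (f : Fin N → ℕ) (p q : Fin N) (hpq : p ≠ q) :
    ∑ m, f m = f p + f q + ∑ m ∈ (Finset.univ.erase p).erase q, f m := by
  rw [← Finset.add_sum_erase _ f (Finset.mem_univ p)]
  rw [← Finset.add_sum_erase _ f (Finset.mem_erase.2 ⟨hpq.symm, Finset.mem_univ q⟩)]
  ring

/-- R of a value-swapped permutation. -/
lemma R_swap (x : Equiv.Perm (Fin N)) (p q : Fin N) (hpq : (p : ℕ) < q)
    (hx : (x p : ℕ) < x q) (K J : ℕ) :
    R (Equiv.swap (x p) (x q) * x) K J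
      = R x K J + if (p : ℕ) < K ∧ K ≤ (q : ℕ) ∧ (x p : ℕ) < J ∧ J ≤ (x q : ℕ) then 1 else 0 := by
  have hpq' : p ≠ q := fun h => by simp [h] at hpq
  set y := Equiv.swap (x p) (x q) * x with hy
  have hyp : y p = x q := by simp [hy, Equiv.swap_apply_left]
  have hyq : y q = x p := by simp [hy, Equiv.swap_apply_right]
  have hym : ∀ m, m ≠ p → m ≠ q → y m = x m := by
    intro m h1 h2
    simp only [hy, Equiv.Perm.mul_apply]
    exact Equiv.swap_apply_of_ne_of_ne (fun h => h1 (x.injective h)) (fun h => h2 (x.injective h))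
  unfold R
  rw [sum_split_two (fun m => if (m : ℕ) < K ∧ J ≤ ((y m : Fin N) : ℕ) then 1 else 0) p q hpq',
      sum_split_two (fun m => if (m : ℕ) < K ∧ J ≤ ((x m : Fin N) : ℕ) then 1 else 0) p q hpq']
  have hcongr : ∑ m ∈ (Finset.univ.erase p).erase q,
      (if (m : ℕ) < K ∧ J ≤ ((y m : Fin N) : ℕ) then 1 else 0)
      = ∑ m ∈ (Finset.univ.erase p).erase q,
      (if (m : ℕ) < K ∧ J ≤ ((x m : Fin N) : ℕ) then 1 else 0) := by
    apply Finset.sum_congr rfl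
    intro m hm
    rw [Finset.mem_erase, Finset.mem_erase] at hm
    rw [hym m hm.2.1 hm.1]
  rw [hcongr, hyp, hyq]
  have h1 : (p:ℕ) ≠ (q:ℕ) := fun h => hpq' (Fin.val_injective h)
  split_ifs <;> omega

lemma invCount_lt_swap (x : Equiv.Perm (Fin N)) (p q : Fin N) (hpq : p < q)
    (hx : x p < x q) :
    invCount x < invCount (Equiv.swap (x p) (x q) * x) := by
  set s : Equiv.Perm (Fin N) := Equiv.swap p q with hs
  have hy : Equiv.swap (x p) (x q) * x = x * s := (Equiv.mul_swap_eq_swap_mul x p q).symm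
  rw [hy]
  set A : Finset (Fin N × Fin N) :=
    Finset.univ.filter (fun pr : Fin N × Fin N => pr.1 < pr.2 ∧ x pr.2 < x pr.1) with hA
  set B : Finset (Fin N × Fin N) :=
    Finset.univ.filter (fun pr : Fin N × Fin N => s pr.1 < s pr.2 ∧ x pr.2 < x pr.1) with hB
  have hsinv : ∀ m, s (s m) = m := fun m => Equiv.swap_apply_self p q m
  -- invCount (x * s) = B.card
  have hcardB : invCount (x * s) = B.card := by
    unfold invCount
    apply Finset.card_nbij' (i := fun pr => (s pr.1, s pr.2)) (j := fun pr => (s pr.1, s pr.2))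
    · intro pr hpr
      simp only [Finset.mem_coe, Finset.mem_filter, Finset.mem_univ, true_and] at hpr ⊢
      simp only [hB, Finset.mem_filter, Finset.mem_univ, true_and, hsinv]
      exact ⟨hpr.1, hpr.2⟩
    · intro pr hpr
      simp only [hB, Finset.mem_coe, Finset.mem_filter, Finset.mem_univ, true_and] at hpr
      simp only [Finset.mem_coe, Finset.mem_filter, Finset.mem_univ, true_and, hsinv]
      exact ⟨hpr.1, by simpa [hsinv] using hpr.2⟩
    · intro pr _; simp [hsinv]
    · intro pr _; simp [hsinv]
  rw [hcardB]
  -- the injection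
  set F : Fin N × Fin N → Fin N × Fin N := fun pr => if s pr.1 < s pr.2 then pr else (s pr.1, s pr.2)
    with hF
  have hqp_ne : p ≠ q := ne_of_lt hpq
  have hmapsto : ∀ pr ∈ A, F pr ∈ B := by
    intro pr hpr
    simp only [hA, Finset.mem_filter, Finset.mem_univ, true_and] at hpr
    obtain ⟨h12, hx21⟩ := hpr
    simp only [hF]
    split_ifs with hflip
    · simp only [hB, Finset.mem_filter, Finset.mem_univ, true_and]
      exact ⟨hflip, hx21⟩
    · simp only [hB, Finset.mem_filter, Finset.mem_univ, true_and, hsinv]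
      refine ⟨h12, ?_⟩
      -- case analysis
      obtain ⟨c, c'⟩ := pr
      simp only at h12 hx21 hflip ⊢
      have sp : s p = q := by rw [hs]; exact Equiv.swap_apply_left p q
      have sq : s q = p := by rw [hs]; exact Equiv.swap_apply_right p q
      have sval : ∀ m : Fin N, m ≠ p → m ≠ q → s m = m := by
        intro m h1 h2; rw [hs]; exact Equiv.swap_apply_of_ne_of_ne h1 h2
      rcases eq_or_ne p c with rfl | hcp
      · rcases eq_or_ne q c' with rfl | hc'q
        · exact absurd hx (not_lt.2 hx21.le)
        · have hc'p : c' ≠ p := ne_of_gt h12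
          rw [sp, sval c' hc'p (Ne.symm hc'q)]
          exact lt_trans hx21 hx
      · rcases eq_or_ne q c with rfl | hcq
        · have hc'q : c' ≠ q := ne_of_gt h12
          have hc'p : c' ≠ p := ne_of_gt (lt_trans hpq h12)
          rw [sq, sval c' hc'p hc'q] at hflip
          exact absurd (lt_trans hpq h12) hflip
        · rw [sval c (Ne.symm hcp) (Ne.symm hcq)] at hflip ⊢
          rcases eq_or_ne p c' with rfl | hc'p
          · rw [sp] at hflip
            exact absurd (lt_trans h12 hpq) hflip
          · rcases eq_or_ne q c' with rfl | hc'q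
            · rw [sq] at hflip ⊢
              exact lt_trans hx hx21
            · rw [sval c' (Ne.symm hc'p) (Ne.symm hc'q)] at hflip
              exact absurd h12 hflip
  have hinj : Set.InjOn F A := by
    intro a ha b hb hab
    simp only [hA, Finset.coe_filter, Set.mem_setOf_eq, Finset.mem_univ, true_and] at ha hb
    simp only [hF] at hab
    have hkey : ∀ (u : Fin N × Fin N), u.1 < u.2 → ¬ (s u.1 < s u.2) → s u.2 < s u.1 := by
      intro u h1 h2
      rcases lt_trichotomy (s u.1) (s u.2) with h | h | h
      · exact absurd h h2
      · exact absurd (s.injective h) (ne_of_lt h1)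
      · exact h
    split_ifs at hab with h1 h2 h2
    · exact hab
    · exfalso; apply h2; have := ha.1; rw [hab] at this; exact this
    · exfalso; apply h1; have := hb.1; rw [← hab] at this; exact this
    · have e1 : s a.1 = s b.1 := congrArg Prod.fst hab
      have e2 : s a.2 = s b.2 := congrArg Prod.snd hab
      exact Prod.ext (s.injective e1) (s.injective e2)
  have hqpB : (q, p) ∈ B := by
    simp only [hB, Finset.mem_filter, Finset.mem_univ, true_and]
    constructor
    · have sp : s p = q := by rw [hs]; exact Equiv.swap_apply_left p q
      have sq : s q = p := by rw [hs]; exact Equiv.swap_apply_right p q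
      rw [sp, sq]; exact hpq
    · exact hx
  have hqp_notin : (q, p) ∉ A.image F := by
    intro hmem
    obtain ⟨pr, hpr, hFpr⟩ := Finset.mem_image.1 hmem
    simp only [hA, Finset.mem_filter, Finset.mem_univ, true_and] at hpr
    simp only [hF] at hFpr
    split_ifs at hFpr with hflip
    · rw [hFpr] at hpr
      exact absurd (lt_trans hpr.1 hpq) (by simp [lt_irrefl])
    · have e1 : s pr.1 = q := congrArg Prod.fst hFpr
      have e2 : s pr.2 = p := congrArg Prod.snd hFpr
      have sp : s p = q := by rw [hs]; exact Equiv.swap_apply_left p q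
      have sq : s q = p := by rw [hs]; exact Equiv.swap_apply_right p q
      have : pr.1 = p := by
        have := congrArg s e1; rwa [hsinv, sq] at this
      have h2 : pr.2 = q := by
        have := congrArg s e2; rwa [hsinv, sp] at this
      rw [this, h2] at hpr
      exact absurd hx (not_lt.2 hpr.2.le)
  have hssub : A.image F ⊂ B := by
    constructor
    · intro u hu
      obtain ⟨pr, hpr, hFpr⟩ := Finset.mem_image.1 hu
      rw [← hFpr]; exact hmapsto pr hpr
    · intro hBsub
      exact hqp_notin (hBsub hqpB)
  calc invCount x = A.card := rfl
    _ = (A.image F).card := (Finset.card_image_of_injOn hinj).symm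
    _ < B.card := Finset.card_lt_card hssub

def Rlow (x : Equiv.Perm (Fin N)) (p : Fin N) (J : ℕ) : ℕ :=
  ∑ m : Fin N, if (m : ℕ) < (p : ℕ) ∧ J ≤ (x m : ℕ) then 1 else 0

def Rmid (x : Equiv.Perm (Fin N)) (p : Fin N) (K J : ℕ) : ℕ :=
  ∑ m : Fin N, if (p : ℕ) < (m : ℕ) ∧ (m : ℕ) < K ∧ J ≤ (x m : ℕ) then 1 else 0

lemma R_split (x : Equiv.Perm (Fin N)) (p : Fin N) (K J : ℕ) (h : (p : ℕ) < K) :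
    R x K J = Rlow x p J + (if J ≤ (x p : ℕ) then 1 else 0) + Rmid x p K J := by
  unfold R Rlow Rmid
  have hmid : (if J ≤ (x p : ℕ) then 1 else 0)
      = ∑ m : Fin N, if m = p ∧ J ≤ (x m : ℕ) then 1 else 0 := by
    rw [Finset.sum_eq_single p]
    · simp
    · intro m _ hm; simp [hm]
    · intro hm; exact absurd (Finset.mem_univ p) hm
  rw [hmid, ← Finset.sum_add_distrib, ← Finset.sum_add_distrib]
  apply Finset.sum_congr rfl
  intro m _
  simp only [← Fin.val_eq_val]
  split_ifs <;> omega

lemma R_succ (x : Equiv.Perm (Fin N)) (K : ℕ) (hK : K < N) (J : ℕ) :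
    R x (K + 1) J = R x K J + (if J ≤ (x ⟨K, hK⟩ : ℕ) then 1 else 0) := by
  unfold R
  have hmid : (if J ≤ (x ⟨K, hK⟩ : ℕ) then 1 else 0)
      = ∑ m : Fin N, if m = ⟨K, hK⟩ ∧ J ≤ (x m : ℕ) then 1 else 0 := by
    rw [Finset.sum_eq_single (⟨K, hK⟩ : Fin N)]
    · simp
    · intro m _ hm; simp [hm]
    · intro hm; exact absurd (Finset.mem_univ _) hm
  rw [hmid, ← Finset.sum_add_distrib]
  apply Finset.sum_congr rfl
  intro m _
  simp only [← Fin.val_eq_val]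
  split_ifs <;> omega

lemma R_ge (x : Equiv.Perm (Fin N)) {K : ℕ} (hK : N ≤ K) (J : ℕ) : R x K J = R x N J := by
  unfold R
  apply Finset.sum_congr rfl
  intro m _
  have := m.isLt
  split_ifs <;> omega

lemma Rlow_congr {x y : Equiv.Perm (Fin N)} (p : Fin N) (J : ℕ)
    (h : ∀ m : Fin N, (m : ℕ) < (p : ℕ) → x m = y m) : Rlow x p J = Rlow y p J := by
  unfold Rlow
  apply Finset.sum_congr rfl
  intro m _
  by_cases hm : (m : ℕ) < (p : ℕ)
  · rw [h m hm]
  · rw [if_neg (fun hc => hm hc.1), if_neg (fun hc => hm hc.1)]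

lemma Rmid_congrJ {x : Equiv.Perm (Fin N)} {p : Fin N} {K J J' : ℕ}
    (h : ∀ m : Fin N, (p : ℕ) < (m : ℕ) → (m : ℕ) < K → (J ≤ (x m : ℕ) ↔ J' ≤ (x m : ℕ))) :
    Rmid x p K J = Rmid x p K J' := by
  unfold Rmid
  apply Finset.sum_congr rfl
  intro m _
  by_cases h1 : (p : ℕ) < (m : ℕ)
  · by_cases h2 : (m : ℕ) < K
    · have := h m h1 h2; split_ifs <;> tauto
    · rw [if_neg (fun hc => h2 hc.2.1), if_neg (fun hc => h2 hc.2.1)]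
  · rw [if_neg (fun hc => h1 hc.1), if_neg (fun hc => h1 hc.1)]

lemma Rmid_monoJ (x : Equiv.Perm (Fin N)) (p : Fin N) (K : ℕ) {J J' : ℕ} (h : J' ≤ J) :
    Rmid x p K J ≤ Rmid x p K J' :=
  Finset.sum_le_sum (fun m _ => by split_ifs <;> omega)

lemma Rmid_zero (x : Equiv.Perm (Fin N)) (p : Fin N) (J : ℕ) : Rmid x p ((p : ℕ) + 1) J = 0 := by
  unfold Rmid
  apply Finset.sum_eq_zero
  intro m _
  have : ¬((p : ℕ) < (m : ℕ) ∧ (m : ℕ) < (p : ℕ) + 1 ∧ J ≤ (x m : ℕ)) := by omega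
  rw [if_neg this]

lemma eq_of_R_eq {x y : Equiv.Perm (Fin N)}
    (h : ∀ K J : ℕ, K ≤ N → J ≤ N → R x K J = R y K J) : x = y := by
  apply Equiv.ext
  intro m
  have key : ∀ J : ℕ, J ≤ N → (J ≤ (x m : ℕ) ↔ J ≤ (y m : ℕ)) := by
    intro J hJ
    have h1 := R_succ x (m : ℕ) m.isLt J
    have h2 := R_succ y (m : ℕ) m.isLt J
    have h3 := h (m : ℕ) J (le_of_lt m.isLt) hJ
    have h4 := h ((m : ℕ) + 1) J m.isLt hJ
    have hm : (⟨(m : ℕ), m.isLt⟩ : Fin N) = m := rfl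
    rw [hm] at h1 h2
    split_ifs at h1 h2 with hx hy
    · tauto
    · omega
    · omega
    · tauto
  have hx := (key (x m : ℕ) (le_of_lt (x m).isLt)).1 le_rfl
  have hy := (key (y m : ℕ) (le_of_lt (y m).isLt)).2 le_rfl
  exact Fin.ext (le_antisymm hx hy)

def M (x : Equiv.Perm (Fin N)) : ℕ :=
  ∑ K ∈ Finset.range (N + 1), ∑ J ∈ Finset.range (N + 1), R x K J

lemma M_mono {x y : Equiv.Perm (Fin N)} (h : Dom x y) : M x ≤ M y :=
  Finset.sum_le_sum fun _ _ => Finset.sum_le_sum fun _ _ => h _ _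

lemma eq_of_dom_M {x y : Equiv.Perm (Fin N)} (hd : Dom x y) (hM : M x = M y) : x = y := by
  apply eq_of_R_eq
  intro K J hK hJ
  by_contra hne
  have hlt : R x K J < R y K J := lt_of_le_of_ne (hd K J) hne
  have : M x < M y := by
    apply Finset.sum_lt_sum (fun _ _ => Finset.sum_le_sum fun _ _ => hd _ _)
    refine ⟨K, Finset.mem_range.2 (by omega), ?_⟩
    apply Finset.sum_lt_sum (fun _ _ => hd _ _)
    exact ⟨J, Finset.mem_range.2 (by omega), hlt⟩
  omega

lemma M_lt_swap (x : Equiv.Perm (Fin N)) (p q : Fin N) (hpq : (p : ℕ) < q)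
    (hx : (x p : ℕ) < x q) : M x < M (Equiv.swap (x p) (x q) * x) := by
  apply Finset.sum_lt_sum
  · intro K _
    apply Finset.sum_le_sum
    intro J _
    rw [R_swap x p q hpq hx K J]
    exact Nat.le_add_right _ _
  · refine ⟨(q : ℕ), Finset.mem_range.2 (by have := q.isLt; omega), ?_⟩
    apply Finset.sum_lt_sum
    · intro J _
      rw [R_swap x p q hpq hx]
      exact Nat.le_add_right _ _
    · refine ⟨(x q : ℕ), Finset.mem_range.2 (by have := (x q).isLt; omega), ?_⟩
      rw [R_swap x p q hpq hx]
      have hcond : (p : ℕ) < (q : ℕ) ∧ (q : ℕ) ≤ (q : ℕ) ∧ (x p : ℕ) < (x q : ℕ)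
          ∧ (x q : ℕ) ≤ (x q : ℕ) := ⟨hpq, le_rfl, hx, le_rfl⟩
      rw [if_pos hcond]
      omega

lemma exists_step (x y : Equiv.Perm (Fin N)) (hxy : x ≠ y) (hdom : Dom x y) :
    ∃ p q : Fin N, (p : ℕ) < q ∧ (x p : ℕ) < x q ∧ Dom (Equiv.swap (x p) (x q) * x) y := by
  classical
  set diffs := Finset.univ.filter (fun m : Fin N => x m ≠ y m) with hdiffs
  have hne : diffs.Nonempty := by
    by_contra h
    apply hxy
    apply Equiv.ext; intro m
    by_contra hm
    exact h ⟨m, Finset.mem_filter.2 ⟨Finset.mem_univ _, hm⟩⟩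
  set p := diffs.min' hne with hp
  have hpmem : p ∈ diffs := Finset.min'_mem _ _
  have hpdiff : x p ≠ y p := (Finset.mem_filter.1 hpmem).2
  have hplow : ∀ m : Fin N, (m : ℕ) < (p : ℕ) → x m = y m := by
    intro m hm
    by_contra hmd
    have h1 : p ≤ m := Finset.min'_le diffs m (Finset.mem_filter.2 ⟨Finset.mem_univ _, hmd⟩)
    have := Fin.le_def.1 h1; omega
  have hab : (x p : ℕ) < (y p : ℕ) := by
    by_contra hc
    have hvne : (x p : ℕ) ≠ (y p : ℕ) := fun h => hpdiff (Fin.ext h)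
    have hd := hdom ((p : ℕ) + 1) (x p : ℕ)
    rw [R_split x p _ _ (by omega), R_split y p _ _ (by omega), Rmid_zero, Rmid_zero,
        Rlow_congr p _ hplow, if_pos le_rfl, if_neg (by omega)] at hd
    omega
  have hq0 : ∃ m : Fin N, (p : ℕ) < m ∧ (x p : ℕ) < x m ∧ (x m : ℕ) ≤ y p := by
    refine ⟨x.symm (y p), ?_, ?_, ?_⟩
    · have hxm : x (x.symm (y p)) = y p := x.apply_symm_apply _
      have hne1 : x.symm (y p) ≠ p := by
        intro h; rw [h] at hxm; exact hpdiff hxm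
      have hne2 : ¬ ((x.symm (y p) : ℕ) < (p : ℕ)) := by
        intro h
        have heq := hplow _ h
        have : y (x.symm (y p)) = y p := by rw [← heq, hxm]
        exact hne1 (y.injective this)
      have : (x.symm (y p) : ℕ) ≠ (p : ℕ) := fun h => hne1 (Fin.ext h)
      omega
    · rw [x.apply_symm_apply]; exact hab
    · rw [x.apply_symm_apply]
  obtain ⟨m₀, hm₀⟩ := hq0
  set Cand := Finset.univ.filter
    (fun m : Fin N => (p : ℕ) < m ∧ (x p : ℕ) < x m ∧ (x m : ℕ) ≤ y p) with hCand
  have hCne : Cand.Nonempty := ⟨m₀, Finset.mem_filter.2 ⟨Finset.mem_univ _, hm₀⟩⟩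
  set q := Cand.min' hCne with hq
  have hqmem : q ∈ Cand := Finset.min'_mem _ _
  obtain ⟨hq1, hq2, hq3⟩ : (p : ℕ) < q ∧ (x p : ℕ) < x q ∧ (x q : ℕ) ≤ y p :=
    (Finset.mem_filter.1 hqmem).2
  have hqmin : ∀ m : Fin N, (p : ℕ) < m → (m : ℕ) < (q : ℕ) →
      ¬((x p : ℕ) < x m ∧ (x m : ℕ) ≤ y p) := by
    intro m h1 h2 hc
    have h3 : q ≤ m := Finset.min'_le Cand m
      (Finset.mem_filter.2 ⟨Finset.mem_univ _, ⟨h1, hc.1, hc.2⟩⟩)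
    have := Fin.le_def.1 h3; omega
  refine ⟨p, q, hq1, hq2, ?_⟩
  intro K J
  rw [R_swap x p q hq1 hq2 K J]
  split_ifs with hcond
  · obtain ⟨hK1, hK2, hJ1, hJ2⟩ := hcond
    have hJb : J ≤ (y p : ℕ) := le_trans hJ2 hq3
    have e1 : R x K J = Rlow x p J + Rmid x p K J := by
      rw [R_split x p K J hK1, if_neg (by omega)]
      omega
    have e2 : R y K J = Rlow x p J + 1 + Rmid y p K J := by
      rw [R_split y p K J hK1, if_pos hJb, Rlow_congr p J (fun m hm => (hplow m hm).symm)]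
    have e3 : Rmid x p K J = Rmid x p K ((y p : ℕ) + 1) := by
      apply Rmid_congrJ
      intro m h1 h2
      constructor
      · intro hJm
        have := hqmin m h1 (by omega)
        omega
      · intro h; omega
    have e4 : Rmid x p K ((y p : ℕ) + 1) ≤ Rmid y p K ((y p : ℕ) + 1) := by
      have hd := hdom K ((y p : ℕ) + 1)
      rw [R_split x p K _ hK1, R_split y p K _ hK1, Rlow_congr p _ hplow,
          if_neg (by omega), if_neg (by omega)] at hd
      omega
    have e5 : Rmid y p K ((y p : ℕ) + 1) ≤ Rmid y p K J := Rmid_monoJ y p K (by omega)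
    omega
  · simpa using hdom K J

lemma dom_to_le {x y : Equiv.Perm (Fin N)} (h : Dom x y) : permBruhatLE x y := by
  suffices H : ∀ k : ℕ, ∀ x : Equiv.Perm (Fin N), Dom x y → M y ≤ M x + k → permBruhatLE x y by
    exact H (M y) x h (by omega)
  intro k
  induction k with
  | zero =>
    intro x hd hm
    have hxy : x = y := eq_of_dom_M hd (le_antisymm (M_mono hd) (by omega))
    rw [hxy]
    exact Relation.ReflTransGen.refl
  | succ k ih =>
    intro x hd hm
    by_cases hxy : x = y
    · rw [hxy]
      exact Relation.ReflTransGen.refl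
    · obtain ⟨p, q, hpq, hxpq, hd'⟩ := exists_step x y hxy hd
      have h1 : M x < M (Equiv.swap (x p) (x q) * x) := M_lt_swap x p q hpq hxpq
      have h2 : M (Equiv.swap (x p) (x q) * x) ≤ M y := M_mono hd'
      have hstep : invCount x < invCount (Equiv.swap (x p) (x q) * x)
          ∧ IsTransposition (x * (Equiv.swap (x p) (x q) * x)⁻¹) := by
        constructor
        · exact invCount_lt_swap x p q (Fin.lt_def.mpr hpq) (Fin.lt_def.mpr hxpq)
        · have heq : x * (Equiv.swap (x p) (x q) * x)⁻¹ = Equiv.swap (x p) (x q) := by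
            rw [mul_inv_rev, Equiv.swap_inv, mul_inv_cancel_left]
          exact ⟨x p, x q, ne_of_lt (Fin.lt_def.mpr hxpq), heq⟩
      exact Relation.ReflTransGen.head hstep (ih _ hd' (by omega))

lemma step_dom_aux {x y : Equiv.Perm (Fin N)} (a b : Fin N) (hab : (a : ℕ) < (b : ℕ))
    (hy : y = Equiv.swap a b * x) (hinv : invCount x < invCount y) : Dom x y := by
  set p := x.symm a with hp
  set q := x.symm b with hq
  have hxp : x p = a := x.apply_symm_apply a
  have hxq : x q = b := x.apply_symm_apply b
  have hpq : (p : ℕ) ≠ (q : ℕ) := by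
    intro h
    have : p = q := Fin.ext h
    rw [this, hxq] at hxp
    rw [hxp] at hab
    omega
  rcases lt_or_gt_of_ne hpq with h | h
  · intro K J
    have hyy : y = Equiv.swap (x p) (x q) * x := by rw [hxp, hxq, hy]
    rw [hyy, R_swap x p q h (by rw [hxp, hxq]; exact hab)]
    exact Nat.le_add_right _ _
  · exfalso
    have hyq : y q = a := by rw [hy, Equiv.Perm.mul_apply, hxq, Equiv.swap_apply_right]
    have hyp : y p = b := by rw [hy, Equiv.Perm.mul_apply, hxp, Equiv.swap_apply_left]
    have hlt : invCount y < invCount (Equiv.swap (y q) (y p) * y) := by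
      apply invCount_lt_swap y q p (Fin.lt_def.mpr h)
      rw [hyq, hyp]; exact Fin.lt_def.mpr hab
    have hback : Equiv.swap (y q) (y p) * y = x := by
      rw [hyq, hyp, hy, ← mul_assoc, Equiv.swap_mul_self, one_mul]
    rw [hback] at hlt
    omega

lemma step_dom {x y : Equiv.Perm (Fin N)} (hinv : invCount x < invCount y)
    (ht : IsTransposition (x * y⁻¹)) : Dom x y := by
  obtain ⟨a, b, hab, heq⟩ := ht
  have hy : y = Equiv.swap a b * x := by
    have hx : x = Equiv.swap a b * y := by
      rw [← heq, inv_mul_cancel_right]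
    rw [hx, ← mul_assoc, Equiv.swap_mul_self, one_mul]
  have habv : (a : ℕ) ≠ (b : ℕ) := fun h => hab (Fin.ext h)
  rcases lt_or_gt_of_ne habv with h | h
  · exact step_dom_aux a b h hy hinv
  · exact step_dom_aux b a h (by rw [Equiv.swap_comm] at hy; exact hy) hinv

lemma le_dom {x y : Equiv.Perm (Fin N)} (h : permBruhatLE x y) : Dom x y := by
  induction h with
  | refl => exact Dom.refl x
  | tail hab hbc ih => exact Dom.trans ih (step_dom hbc.1 hbc.2)

lemma le_iff_dom {x y : Equiv.Perm (Fin N)} : permBruhatLE x y ↔ Dom x y :=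
  ⟨le_dom, dom_to_le⟩

lemma mem_iff_lt_card {n : ℕ} (S : Finset (Fin n))
    (hS : ∀ ⦃k k' : Fin n⦄, k' ≤ k → k ∈ S → k' ∈ S) (k : Fin n) :
    k ∈ S ↔ (k : ℕ) < S.card := by
  constructor
  · intro hk
    have hsub : Finset.Iic k ⊆ S := fun m hm => hS (Finset.mem_Iic.1 hm) hk
    have hle := Finset.card_le_card hsub
    rw [Fin.card_Iic] at hle
    omega
  · intro hk
    by_contra hkn
    have hsub : S ⊆ Finset.Iio k := by
      intro m hm
      rw [Finset.mem_Iio]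
      by_contra hmk
      exact hkn (hS (le_of_not_gt hmk) hm)
    have hle := Finset.card_le_card hsub
    rw [Fin.card_Iio] at hle
    omega

lemma lowerset_filter_lt {n : ℕ} (f : Fin n → Fin (n + 1)) (hf : StrictMono f) (K : ℕ)
    (k : Fin n) :
    (f k : ℕ) < K ↔ (k : ℕ) < (Finset.univ.filter (fun k' : Fin n => (f k' : ℕ) < K)).card := by
  rw [← mem_iff_lt_card (Finset.univ.filter (fun k' : Fin n => (f k' : ℕ) < K))
      (fun k1 k2 h12 h1 => ?_) k]
  · simp only [Finset.mem_filter, Finset.mem_univ, true_and]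
  · simp only [Finset.mem_filter, Finset.mem_univ, true_and] at h1 ⊢
    have : f k2 ≤ f k1 := hf.monotone h12
    have := Fin.le_def.1 this
    omega

/-- counting identity: rank of the big permutation in terms of the flattened one -/
lemma R_delete {n : ℕ} (v : Equiv.Perm (Fin (n + 1))) (i : Fin (n + 1)) (u : Equiv.Perm (Fin n))
    (hu : ∀ k : Fin n, (v i).succAbove (u k) = v (i.succAbove k)) (K J : ℕ) :
    R v K J = (if (i : ℕ) < K ∧ J ≤ (v i : ℕ) then 1 else 0)
      + R u ((Finset.univ.filter (fun k : Fin n => ((i.succAbove k : Fin (n + 1)) : ℕ) < K)).card)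
          ((Finset.univ.filter
              (fun j : Fin n => (((v i).succAbove j : Fin (n + 1)) : ℕ) < J)).card) := by
  unfold R
  rw [Fin.sum_univ_succAbove (fun m : Fin (n + 1) =>
      if (m : ℕ) < K ∧ J ≤ (v m : ℕ) then 1 else 0) i]
  congr 1
  apply Finset.sum_congr rfl
  intro k _
  rw [← hu k]
  have h1 := lowerset_filter_lt i.succAbove (Fin.strictMono_succAbove i) K k
  have h2' := lowerset_filter_lt (v i).succAbove (Fin.strictMono_succAbove (v i)) J (u k)
  have h2 : J ≤ (((v i).succAbove (u k) : Fin (n + 1)) : ℕ) ↔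
      (Finset.univ.filter
        (fun j : Fin n => (((v i).succAbove j : Fin (n + 1)) : ℕ) < J)).card ≤ (u k : ℕ) := by
    constructor
    · intro h; by_contra hc; have := h2'.2 (by omega); omega
    · intro h; by_contra hc; have := h2'.1 (by omega); omega
  exact if_congr (and_congr h1 h2) rfl rfl

lemma nat_ivt (g : ℕ → ℕ) (h0 : g 0 = 0) (hstep : ∀ K, g (K + 1) ≤ g K + 1) :
    ∀ M a, a ≤ g M → ∃ K, g K = a := by
  intro M
  induction M with
  | zero => intro a ha; exact ⟨0, by omega⟩
  | succ M ih =>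
    intro a ha
    by_cases h : a ≤ g M
    · exact ih a h
    · exact ⟨M + 1, by have := hstep M; omega⟩

lemma exists_card_filter {n : ℕ} (f : Fin n → Fin (n + 1)) (hf : Function.Injective f)
    (a : ℕ) (ha : a ≤ n) :
    ∃ K : ℕ, (Finset.univ.filter (fun k : Fin n => (f k : ℕ) < K)).card = a := by
  set g : ℕ → ℕ := fun K => (Finset.univ.filter (fun k : Fin n => (f k : ℕ) < K)).card with hg
  have h0 : g 0 = 0 := by
    rw [hg]
    simp only [Nat.not_lt_zero]
    rw [Finset.filter_false, Finset.card_empty]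
  have hstep : ∀ K, g (K + 1) ≤ g K + 1 := by
    intro K
    rw [hg]
    have hsub : Finset.univ.filter (fun k : Fin n => (f k : ℕ) < K + 1)
        ⊆ Finset.univ.filter (fun k : Fin n => (f k : ℕ) < K)
          ∪ Finset.univ.filter (fun k : Fin n => (f k : ℕ) = K) := by
      intro m hm
      rw [Finset.mem_filter] at hm
      rw [Finset.mem_union, Finset.mem_filter, Finset.mem_filter]
      rcases Nat.lt_or_ge (f m : ℕ) K with h | h
      · exact Or.inl ⟨hm.1, h⟩
      · exact Or.inr ⟨hm.1, by omega⟩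
    have hone : (Finset.univ.filter (fun k : Fin n => (f k : ℕ) = K)).card ≤ 1 := by
      apply Finset.card_le_one.2
      intro m1 h1 m2 h2
      rw [Finset.mem_filter] at h1 h2
      exact hf (Fin.ext (h1.2.trans h2.2.symm))
    calc (Finset.univ.filter (fun k : Fin n => (f k : ℕ) < K + 1)).card
        ≤ _ := Finset.card_le_card hsub
      _ ≤ _ + _ := Finset.card_union_le _ _
      _ ≤ (Finset.univ.filter (fun k : Fin n => (f k : ℕ) < K)).card + 1 := by omega
  have htop : g (n + 1) = n := by
    show (Finset.univ.filter (fun k : Fin n => (f k : ℕ) < n + 1)).card = n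
    have : Finset.univ.filter (fun k : Fin n => (f k : ℕ) < n + 1) = Finset.univ := by
      apply Finset.filter_true_of_mem
      intro m _
      exact (f m).isLt
    rw [this, Finset.card_univ, Fintype.card_fin]
  exact nat_ivt g h0 hstep (n + 1) a (by omega)

lemma R_trunc {n : ℕ} (u : Equiv.Perm (Fin n)) {a : ℕ} (ha : n ≤ a) (b : ℕ) :
    R u a b = R u n b := by
  unfold R
  apply Finset.sum_congr rfl
  intro m _
  have := m.isLt
  split_ifs <;> omega

lemma R_zero_of_ge {n : ℕ} (u : Equiv.Perm (Fin n)) (a : ℕ) {b : ℕ} (hb : n ≤ b) :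
    R u a b = 0 := by
  unfold R
  apply Finset.sum_eq_zero
  intro m _
  have := (u m).isLt
  rw [if_neg (by omega)]

lemma dom_delete {n : ℕ} (v w : Equiv.Perm (Fin (n + 1))) (i : Fin (n + 1))
    (hvw : v i = w i) (u₁ u₂ : Equiv.Perm (Fin n))
    (hu₁ : ∀ k : Fin n, (v i).succAbove (u₁ k) = v (i.succAbove k))
    (hu₂ : ∀ k : Fin n, (w i).succAbove (u₂ k) = w (i.succAbove k)) :
    Dom v w ↔ Dom u₁ u₂ := by
  have hu₂' : ∀ k : Fin n, (v i).succAbove (u₂ k) = w (i.succAbove k) := by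
    intro k; rw [hvw]; exact hu₂ k
  have idv : ∀ K J : ℕ, R v K J = (if (i : ℕ) < K ∧ J ≤ (v i : ℕ) then 1 else 0)
      + R u₁ ((Finset.univ.filter (fun k : Fin n => ((i.succAbove k : Fin (n + 1)) : ℕ) < K)).card)
          ((Finset.univ.filter
              (fun j : Fin n => (((v i).succAbove j : Fin (n + 1)) : ℕ) < J)).card) :=
    R_delete v i u₁ hu₁
  have idw : ∀ K J : ℕ, R w K J = (if (i : ℕ) < K ∧ J ≤ (v i : ℕ) then 1 else 0)
      + R u₂ ((Finset.univ.filter (fun k : Fin n => ((i.succAbove k : Fin (n + 1)) : ℕ) < K)).card)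
          ((Finset.univ.filter
              (fun j : Fin n => (((v i).succAbove j : Fin (n + 1)) : ℕ) < J)).card) := by
    intro K J
    have := R_delete w i u₂ hu₂ K J
    rw [this, ← hvw]
  constructor
  · intro h a b
    rcases Nat.lt_or_ge b (n + 1) with hb | hb
    · -- b ≤ n
      rcases Nat.lt_or_ge a (n + 1) with ha | ha
      · obtain ⟨K, hK⟩ := exists_card_filter i.succAbove
          (Fin.succAbove_right_injective (p := i)) a (by omega)
        obtain ⟨J, hJ⟩ := exists_card_filter (v i).succAbove
          (Fin.succAbove_right_injective (p := v i)) b (by omega)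
        have hv := idv K J
        have hw := idw K J
        rw [hK, hJ] at hv hw
        have := h K J
        omega
      · rw [R_trunc u₁ (by omega), R_trunc u₂ (by omega)]
        obtain ⟨K, hK⟩ := exists_card_filter i.succAbove
          (Fin.succAbove_right_injective (p := i)) n (by omega)
        obtain ⟨J, hJ⟩ := exists_card_filter (v i).succAbove
          (Fin.succAbove_right_injective (p := v i)) b (by omega)
        have hv := idv K J
        have hw := idw K J
        rw [hK, hJ] at hv hw
        have := h K J
        omega
    · rw [R_zero_of_ge u₁ a (by omega), R_zero_of_ge u₂ a (by omega)]
  · intro h K J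
    rw [idv K J, idw K J]
    exact Nat.add_le_add_left (h _ _) _

end S8

/-- Let `v, w ∈ 𝔖_{n+1}` with `v_i = w_i` for some index `i`, and let
`v̂, ŵ` be obtained by deleting the `i`-th entry.  Then `v ≤ w` in the Bruhat–Chevalley
order of `𝔖_{n+1}` iff `fl(v̂) ≤ fl(ŵ)` in the Bruhat–Chevalley order of `𝔖_n`.
Here the flattening `fl(v̂)` is the unique `u ∈ 𝔖_n` whose entries compare the same way
as those of `v̂`, i.e. `(v i).succAbove (u k) = v (i.succAbove k)` for all `k`. -/
theorem statement8 {n : ℕ} (v w : Equiv.Perm (Fin (n + 1))) (i : Fin (n + 1))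
    (hvw : v i = w i)
    (u₁ u₂ : Equiv.Perm (Fin n))
    (hu₁ : ∀ k : Fin n, (v i).succAbove (u₁ k) = v (i.succAbove k))
    (hu₂ : ∀ k : Fin n, (w i).succAbove (u₂ k) = w (i.succAbove k)) :
    permBruhatLE v w ↔ permBruhatLE u₁ u₂ := by
  rw [S8.le_iff_dom, S8.le_iff_dom]
  exact S8.dom_delete v w i hvw u₁ u₂ hu₁ hu₂
end

section
/- Let 1 ≤ a_1 < ⋯ < a_k ≤ n, Σ = {a_1, …, a_k}, and let W' ⊆ 𝔖_n be the subgroup generated by the transpositions r_{a_i,a_j} for i < j. Then W' is a parabolic subgroup of 𝔖_n; for any permutation z ∈ 𝔖_n with z_i = a_i for 1 ≤ i ≤ k, conjugation by z gives an isomorphism ι: 𝔖_k → W' (where 𝔖_k ⊆ 𝔖_n consists of permutations fixing k+1, …, n); and the composite ι ∘ fl_Σ: 𝔖_n → W' satisfies properties (a) and (b) of the pattern map, hence equals the pattern map φ for W'. -/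
variable {W : Type*} [Group W]

/-- The set of adjacent transpositions, the simple reflections of `𝔖_m`. -/
def adjTranspositions (m : ℕ) : Set (Equiv.Perm (Fin m)) :=
  {t | ∃ i j : Fin m, (i : ℕ) + 1 = (j : ℕ) ∧ t = Equiv.swap i j}

namespace Aux9

open Equiv Finset

variable {m : ℕ}

def invSet (w : Equiv.Perm (Fin m)) : Finset (Fin m × Fin m) :=
  Finset.univ.filter (fun p : Fin m × Fin m => p.1 < p.2 ∧ w p.2 < w p.1)

lemma invCount_eq (w : Equiv.Perm (Fin m)) : invCount w = (invSet w).card := rfl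

lemma mem_invSet {w : Equiv.Perm (Fin m)} {p : Fin m × Fin m} :
    p ∈ invSet w ↔ p.1 < p.2 ∧ w p.2 < w p.1 := by simp [invSet]

lemma strictMono_perm_eq_one (w : Equiv.Perm (Fin m)) (h : StrictMono w) : w = 1 := by
  have hc : (Finset.univ : Finset (Fin m)).card = m := by simp
  have h1 : (w : Fin m → Fin m) = (Finset.univ.orderEmbOfFin hc : Fin m → Fin m) :=
    Finset.orderEmbOfFin_unique _ (fun x => Finset.mem_univ _) h
  have h2 : (id : Fin m → Fin m) = (Finset.univ.orderEmbOfFin hc : Fin m → Fin m) :=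
    Finset.orderEmbOfFin_unique _ (fun x => Finset.mem_univ _) strictMono_id
  ext x
  rw [show w x = _ from congrFun h1 x, ← congrFun h2 x]; rfl

lemma invCount_one : invCount (1 : Equiv.Perm (Fin m)) = 0 := by
  rw [invCount, Finset.card_eq_zero, Finset.filter_eq_empty_iff]
  rintro ⟨i, j⟩ -
  simp only [Equiv.Perm.one_apply, not_and, not_lt]
  exact fun h => le_of_lt h

lemma eq_one_of_invCount_eq_zero {w : Equiv.Perm (Fin m)} (h : invCount w = 0) : w = 1 := by
  apply strictMono_perm_eq_one
  intro p q hpq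
  rcases lt_trichotomy (w p) (w q) with h' | h' | h'
  · exact h'
  · exact absurd (w.injective h') (ne_of_lt hpq)
  · exfalso
    have : (p, q) ∈ invSet w := mem_invSet.2 ⟨hpq, h'⟩
    rw [invCount_eq] at h
    simp [Finset.card_eq_zero.1 h] at this

lemma swap_conj_apply {u : Equiv.Perm (Fin m)} {c d : Fin m} (r : Fin m) :
    (Equiv.swap c d * u) (Equiv.swap (u⁻¹ c) (u⁻¹ d) r) = u r := by
  rcases eq_or_ne r (u⁻¹ c) with rfl | h1
  · simp
  rcases eq_or_ne r (u⁻¹ d) with rfl | h2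
  · simp
  · rw [Equiv.swap_apply_of_ne_of_ne h1 h2]
    simp only [Equiv.Perm.mul_apply]
    apply Equiv.swap_apply_of_ne_of_ne
    · exact fun h => h1 (by rw [← h]; simp)
    · exact fun h => h2 (by rw [← h]; simp)

lemma key_main (u : Equiv.Perm (Fin m)) (c d : Fin m) (hcd : c < d)
    (hPQ : u⁻¹ c < u⁻¹ d) :
    invCount u < invCount (Equiv.swap c d * u) ∧
      ((c : ℕ) + 1 = (d : ℕ) → invCount (Equiv.swap c d * u) = invCount u + 1) := by
  set P := u⁻¹ c with hP
  set Q := u⁻¹ d with hQ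
  set v := Equiv.swap c d * u with hv
  set τ := Equiv.swap P Q with hτ
  have huP : u P = c := by simp [hP]
  have huQ : u Q = d := by simp [hQ]
  have hvτ : ∀ r, v (τ r) = u r := fun r => swap_conj_apply r
  have hττ : ∀ r, τ (τ r) = r := fun r => Equiv.swap_apply_self P Q r
  have huτ : ∀ r, u (τ r) = v r := by
    intro r
    have := hvτ (τ r)
    rw [hττ] at this
    exact this.symm
  have hτP : τ P = Q := Equiv.swap_apply_left P Q
  have hτQ : τ Q = P := Equiv.swap_apply_right P Q
  have hvP : v P = d := by rw [← hτQ, hvτ Q, huQ]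
  have hvQ : v Q = c := by rw [← hτP, hvτ P, huP]
  have hvo : ∀ r, r ≠ P → r ≠ Q → v r = u r := by
    intro r h1 h2
    have ht : τ r = r := Equiv.swap_apply_of_ne_of_ne h1 h2
    rw [← ht, hvτ, ht]
  set Φ : Fin m × Fin m → Fin m × Fin m :=
    fun pq => if τ pq.1 < τ pq.2 then (τ pq.1, τ pq.2) else pq with hΦ
  have hΦΦ : ∀ pq : Fin m × Fin m, pq.1 < pq.2 → Φ (Φ pq) = pq := by
    rintro ⟨p, q⟩ hpq
    by_cases hb : τ p < τ q
    · simp only [hΦ, if_pos hb]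
      simp only [hττ]
      rw [if_pos hpq]
    · simp only [hΦ, if_neg hb, if_neg hb]
  have branch2 : ∀ p q : Fin m, p < q → ¬ τ p < τ q →
      (p = P ∧ q = Q) ∨ (p = P ∧ q ≠ Q ∧ q ≠ P) ∨ (q = Q ∧ p ≠ P ∧ p ≠ Q) := by
    intro p q hpq hb
    have hτqp : τ q < τ p := by
      rcases lt_trichotomy (τ p) (τ q) with h | h | h
      · exact absurd h hb
      · exact absurd (τ.injective h) (ne_of_lt hpq)
      · exact h
    rcases eq_or_ne p P with rfl | hpP
    · rcases eq_or_ne q Q with rfl | hqQ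
      · exact Or.inl ⟨rfl, rfl⟩
      · exact Or.inr (Or.inl ⟨rfl, hqQ, ne_of_gt hpq⟩)
    · rcases eq_or_ne q Q with rfl | hqQ
      · exact Or.inr (Or.inr ⟨rfl, hpP, ne_of_lt hpq⟩)
      · exfalso
        rcases eq_or_ne q P with rfl | hqP
        · have hpQ : p ≠ Q := ne_of_lt (lt_trans hpq hPQ)
          rw [hτP, Equiv.swap_apply_of_ne_of_ne hpP hpQ] at hτqp
          exact absurd (lt_trans hpq hPQ) (not_lt.2 (le_of_lt hτqp))
        · rcases eq_or_ne p Q with rfl | hpQ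
          · have hq2 : q ≠ P := fun h => absurd (h ▸ hpq) (not_lt.2 (le_of_lt hPQ))
            rw [hτQ, Equiv.swap_apply_of_ne_of_ne hq2 hqQ] at hτqp
            exact absurd (lt_trans hPQ hpq) (not_lt.2 (le_of_lt hτqp))
          · rw [Equiv.swap_apply_of_ne_of_ne hpP hpQ,
              Equiv.swap_apply_of_ne_of_ne hqP hqQ] at hτqp
            exact absurd hpq (not_lt.2 (le_of_lt hτqp))
  have hΦmem : ∀ pq ∈ invSet u, Φ pq ∈ (invSet v).erase (P, Q) := by
    rintro ⟨p, q⟩ hmem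
    obtain ⟨hpq0, hw0⟩ := mem_invSet.1 hmem
    have hpq : p < q := hpq0
    have hw : u q < u p := hw0
    by_cases hb : τ p < τ q
    · simp only [hΦ, if_pos hb]
      refine Finset.mem_erase.2 ⟨?_, mem_invSet.2 ⟨hb, by rw [hvτ, hvτ]; exact hw⟩⟩
      intro h
      have h1 : τ p = P := congrArg Prod.fst h
      have h2 : τ q = Q := congrArg Prod.snd h
      have hp' : p = Q := by rw [← hττ p, h1, hτP]
      have hq' : q = P := by rw [← hττ q, h2, hτQ]
      rw [hp', hq'] at hpq
      exact absurd hpq (not_lt.2 (le_of_lt hPQ))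
    · simp only [hΦ, if_neg hb]
      rcases branch2 p q hpq hb with ⟨rfl, rfl⟩ | ⟨rfl, hqQ, hqP⟩ | ⟨rfl, hpP, hpQ⟩
      · rw [huP, huQ] at hw
        exact absurd hcd (not_lt.2 (le_of_lt hw))
      · refine Finset.mem_erase.2 ⟨fun h => hqQ (congrArg Prod.snd h),
          mem_invSet.2 ⟨hpq, ?_⟩⟩
        show v q < v P
        rw [hvP, hvo q hqP hqQ]
        rw [huP] at hw
        exact lt_trans hw hcd
      · refine Finset.mem_erase.2 ⟨fun h => hpP (congrArg Prod.fst h),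
          mem_invSet.2 ⟨hpq, ?_⟩⟩
        show v Q < v p
        rw [hvQ, hvo p hpP hpQ]
        rw [huQ] at hw
        exact lt_trans hcd hw
  have hPQv : (P, Q) ∈ invSet v := mem_invSet.2 ⟨hPQ, by show v Q < v P; rw [hvP, hvQ]; exact hcd⟩
  have hinj : ∀ pq ∈ invSet u, ∀ pq' ∈ invSet u, Φ pq = Φ pq' → pq = pq' := by
    intro pq h1 pq' h2 heq
    have e1 := hΦΦ pq (mem_invSet.1 h1).1
    have e2 := hΦΦ pq' (mem_invSet.1 h2).1
    rw [← e1, ← e2, heq]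
  have hcard1 : (invSet u).card ≤ (invSet v).card - 1 := by
    have := Finset.card_le_card_of_injOn Φ hΦmem hinj
    rwa [Finset.card_erase_of_mem hPQv] at this
  have hpos : 1 ≤ (invSet v).card := Finset.card_pos.2 ⟨_, hPQv⟩
  constructor
  · show (invSet u).card < (invSet v).card
    omega
  · intro hadj
    have hΨmem : ∀ pq ∈ (invSet v).erase (P, Q), Φ pq ∈ invSet u := by
      rintro ⟨p, q⟩ hmem
      obtain ⟨hnePQ, hmem⟩ := Finset.mem_erase.1 hmem
      obtain ⟨hpq0, hw0⟩ := mem_invSet.1 hmem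
      have hpq : p < q := hpq0
      have hw : v q < v p := hw0
      by_cases hb : τ p < τ q
      · simp only [hΦ, if_pos hb]
        exact mem_invSet.2 ⟨hb, by rw [huτ, huτ]; exact hw⟩
      · simp only [hΦ, if_neg hb]
        rcases branch2 p q hpq hb with ⟨rfl, rfl⟩ | ⟨rfl, hqQ, hqP⟩ | ⟨rfl, hpP, hpQ⟩
        · exact absurd rfl hnePQ
        · refine mem_invSet.2 ⟨hpq, ?_⟩
          show u q < u P
          rw [huP]
          rw [hvP, hvo q hqP hqQ] at hw
          have hval : (u q : ℕ) < (d : ℕ) := hw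
          have hvc : u q ≠ c := fun h => hqP (by rw [← huP] at h; exact u.injective h)
          have hvc' : (u q : ℕ) ≠ (c : ℕ) := fun h => hvc (Fin.ext h)
          rw [Fin.lt_def]
          omega
        · refine mem_invSet.2 ⟨hpq, ?_⟩
          show u Q < u p
          rw [huQ]
          rw [hvQ, hvo p hpP hpQ] at hw
          have hval : (c : ℕ) < (u p : ℕ) := hw
          have hvd : u p ≠ d := fun h => hpQ (by rw [← huQ] at h; exact u.injective h)
          have hvd' : (u p : ℕ) ≠ (d : ℕ) := fun h => hvd (Fin.ext h)
          rw [Fin.lt_def]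
          omega
    have hinj' : ∀ pq ∈ (invSet v).erase (P, Q), ∀ pq' ∈ (invSet v).erase (P, Q),
        Φ pq = Φ pq' → pq = pq' := by
      intro pq h1 pq' h2 heq
      have e1 := hΦΦ pq (mem_invSet.1 (Finset.mem_of_mem_erase h1)).1
      have e2 := hΦΦ pq' (mem_invSet.1 (Finset.mem_of_mem_erase h2)).1
      rw [← e1, ← e2, heq]
    have hcard2 : (invSet v).card - 1 ≤ (invSet u).card := by
      have := Finset.card_le_card_of_injOn Φ hΨmem hinj'
      rwa [Finset.card_erase_of_mem hPQv] at this
    show (invSet v).card = (invSet u).card + 1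
    omega

lemma key_lt (u : Equiv.Perm (Fin m)) (c d : Fin m) (hcd : c < d)
    (hPQ : u⁻¹ c < u⁻¹ d) : invCount u < invCount (Equiv.swap c d * u) :=
  (key_main u c d hcd hPQ).1

lemma swap_swap_mul (u : Equiv.Perm (Fin m)) (c d : Fin m) :
    Equiv.swap c d * (Equiv.swap c d * u) = u := by
  rw [← mul_assoc, Equiv.swap_mul_self, one_mul]

lemma inv_swap_mul_apply (u : Equiv.Perm (Fin m)) (c d : Fin m) :
    (Equiv.swap c d * u)⁻¹ c = u⁻¹ d ∧ (Equiv.swap c d * u)⁻¹ d = u⁻¹ c := by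
  constructor
  · rw [mul_inv_rev]
    simp
  · rw [mul_inv_rev]
    simp

lemma key_gt (u : Equiv.Perm (Fin m)) (c d : Fin m) (hcd : c < d)
    (hQP : u⁻¹ d < u⁻¹ c) : invCount (Equiv.swap c d * u) < invCount u := by
  set v := Equiv.swap c d * u with hv
  have h1 : v⁻¹ c < v⁻¹ d := by
    rw [(inv_swap_mul_apply u c d).1, (inv_swap_mul_apply u c d).2]
    exact hQP
  have := key_lt v c d hcd h1
  rwa [hv, swap_swap_mul] at this

lemma key_iff (u : Equiv.Perm (Fin m)) (c d : Fin m) (hcd : c < d) :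
    invCount u < invCount (Equiv.swap c d * u) ↔ u⁻¹ c < u⁻¹ d := by
  constructor
  · intro h
    rcases lt_trichotomy (u⁻¹ c) (u⁻¹ d) with h' | h' | h'
    · exact h'
    · exact absurd (u⁻¹.injective h') (ne_of_lt hcd)
    · exact absurd (key_gt u c d hcd h') (not_lt.2 (le_of_lt h))
  · exact key_lt u c d hcd

lemma fin_lt_of_val_succ {c d : Fin m} (h : (c : ℕ) + 1 = (d : ℕ)) : c < d := by
  rw [Fin.lt_def]; omega

lemma key_adj_eq (u : Equiv.Perm (Fin m)) (c d : Fin m) (hadj : (c : ℕ) + 1 = (d : ℕ))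
    (hPQ : u⁻¹ c < u⁻¹ d) :
    invCount (Equiv.swap c d * u) = invCount u + 1 :=
  (key_main u c d (fin_lt_of_val_succ hadj) hPQ).2 hadj

lemma adj_le (u : Equiv.Perm (Fin m)) (c d : Fin m) (hadj : (c : ℕ) + 1 = (d : ℕ)) :
    invCount (Equiv.swap c d * u) ≤ invCount u + 1 := by
  have hcd := fin_lt_of_val_succ hadj
  rcases lt_trichotomy (u⁻¹ c) (u⁻¹ d) with h | h | h
  · rw [key_adj_eq u c d hadj h]
  · exact absurd (u⁻¹.injective h) (ne_of_lt hcd)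
  · exact le_of_lt (lt_trans (key_gt u c d hcd h) (Nat.lt_succ_self _))

lemma word_le : ∀ l : List (Equiv.Perm (Fin m)),
    (∀ t ∈ l, ∃ c d : Fin m, (c : ℕ) + 1 = (d : ℕ) ∧ t = Equiv.swap c d) →
    invCount l.prod ≤ l.length := by
  intro l
  induction l with
  | nil => intro _; simp [invCount_one]
  | cons t l ih =>
    intro h
    obtain ⟨c, d, hadj, rfl⟩ := h t List.mem_cons_self
    rw [List.prod_cons, List.length_cons]
    calc invCount (Equiv.swap c d * l.prod) ≤ invCount l.prod + 1 := adj_le _ c d hadj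
      _ ≤ l.length + 1 := by
        have := ih (fun t' ht' => h t' (List.mem_cons_of_mem _ ht'))
        omega

lemma exists_descent (u : Equiv.Perm (Fin m)) (hu : u ≠ 1) :
    ∃ c d : Fin m, (c : ℕ) + 1 = (d : ℕ) ∧ u⁻¹ d < u⁻¹ c := by
  by_contra h
  push_neg at h
  apply hu
  have : u⁻¹ = 1 := by
    apply strictMono_perm_eq_one
    cases m with
    | zero => intro p; exact absurd p.2 (by omega)
    | succ m' =>
      rw [Fin.strictMono_iff_lt_succ]
      intro i
      have hadj : ((Fin.castSucc i : Fin (m' + 1)) : ℕ) + 1 = ((i.succ : Fin (m' + 1)) : ℕ) := by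
        simp
      have hne : u⁻¹ (Fin.castSucc i) ≠ u⁻¹ i.succ := by
        intro he
        have := u⁻¹.injective he
        rw [← Fin.val_eq_val] at this
        omega
      have hle := h (Fin.castSucc i) i.succ hadj
      exact lt_of_le_of_ne hle hne
  rw [← inv_inv u, this, inv_one]

lemma bubble : ∀ (N : ℕ) (u : Equiv.Perm (Fin m)), invCount u = N →
    ∃ l : List (Equiv.Perm (Fin m)),
      (∀ t ∈ l, ∃ c d : Fin m, (c : ℕ) + 1 = (d : ℕ) ∧ t = Equiv.swap c d) ∧
      l.length = invCount u ∧ l.prod = u := by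
  intro N
  induction N using Nat.strong_induction_on with
  | _ N ih =>
    intro u hN
    rcases eq_or_ne u 1 with rfl | hu
    · exact ⟨[], by simp, by simp [invCount_one], by simp⟩
    · obtain ⟨c, d, hadj, hdes⟩ := exists_descent u hu
      set u' := Equiv.swap c d * u with hu'
      have h1 : u'⁻¹ c < u'⁻¹ d := by
        rw [(inv_swap_mul_apply u c d).1, (inv_swap_mul_apply u c d).2]
        exact hdes
      have h2 : invCount u = invCount u' + 1 := by
        have := key_adj_eq u' c d hadj h1
        rwa [hu', swap_swap_mul] at this
      obtain ⟨l', hl1, hl2, hl3⟩ := ih (invCount u') (by omega) u' rfl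
      refine ⟨Equiv.swap c d :: l', ?_, ?_, ?_⟩
      · rintro t ht
        rcases List.mem_cons.1 ht with rfl | ht'
        · exact ⟨c, d, hadj, rfl⟩
        · exact hl1 t ht'
      · rw [List.length_cons, hl2, h2]
      · rw [List.prod_cons, hl3, hu', swap_swap_mul]

end Aux9

/-- Let `1 ≤ a_1 < ⋯ < a_k ≤ n` (encoded by a strictly monotone
`a : Fin k → Fin n`), `Σ = {a_1, …, a_k}`, and let `W' ⊆ 𝔖_n` be generated by the
transpositions `r_{a_i, a_j}`, `i ≠ j`.  Then `W'` is a parabolic subgroup of `𝔖_n`;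
for `z ∈ 𝔖_n` with `z_i = a_i` (`1 ≤ i ≤ k`), conjugation by `z` gives an isomorphism
`ι : 𝔖_k → W'` (where `u ∈ 𝔖_k` is first extended to `𝔖_n` fixing the remaining
letters by the lift `L`); and `ι ∘ fl_Σ` satisfies properties (a) and (b) of the
pattern map, hence equals the pattern map `φ` for `W'`.  Here `fl_Σ` is characterized
by: the entries of `x` lying in `Σ`, read in position order `p`, are
`a (fl_Σ x 1), …, a (fl_Σ x k)`; `S'` is the set of simple reflections
`r_{a_i, a_{i+1}}` of `W'`, and `≤'` its Bruhat–Chevalley order. -/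
theorem statement9 {n k : ℕ} (hkn : k ≤ n) (a : Fin k → Fin n) (ha : StrictMono a)
    (W' : Subgroup (Equiv.Perm (Fin n)))
    (hW' : W' = Subgroup.closure
      {t | ∃ i j : Fin k, i ≠ j ∧ t = Equiv.swap (a i) (a j)})
    (S' : Set (Equiv.Perm (Fin n)))
    (hS' : S' = {t | ∃ i j : Fin k, (i : ℕ) + 1 = (j : ℕ) ∧ t = Equiv.swap (a i) (a j)})
    (z : Equiv.Perm (Fin n)) (hz : ∀ j : Fin k, z (Fin.castLE hkn j) = a j)
    (L : Equiv.Perm (Fin k) → Equiv.Perm (Fin n))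
    (hL : ∀ u : Equiv.Perm (Fin k),
      (∀ j : Fin k, L u (Fin.castLE hkn j) = Fin.castLE hkn (u j)) ∧
      (∀ m : Fin n, (∀ j : Fin k, m ≠ Fin.castLE hkn j) → L u m = m))
    (ι : Equiv.Perm (Fin k) → Equiv.Perm (Fin n))
    (hι : ∀ u, ι u = z * L u * z⁻¹)
    (flSig : Equiv.Perm (Fin n) → Equiv.Perm (Fin k))
    (hfl : ∀ x : Equiv.Perm (Fin n),
      ∃ p : Fin k → Fin n, StrictMono p ∧ ∀ j : Fin k, x (p j) = a (flSig x j)) :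
    (∃ (T : Set (Equiv.Perm (Fin n))) (g : Equiv.Perm (Fin n)),
      T ⊆ adjTranspositions n ∧
      W' = Subgroup.closure ((fun t => g * t * g⁻¹) '' T)) ∧
    (∀ u v : Equiv.Perm (Fin k), ι (u * v) = ι u * ι v) ∧
    Function.Injective ι ∧
    Set.range ι = (W' : Set (Equiv.Perm (Fin n))) ∧
    (∀ p ∈ W', ∀ x : Equiv.Perm (Fin n), ι (flSig (p * x)) = p * ι (flSig x)) ∧
    (∀ x : Equiv.Perm (Fin n), ∀ p ∈ W',
      genBruhatLE S' (ι (flSig x)) (ι (flSig (p * x))) → permBruhatLE x (p * x)) ∧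
    (∀ φ : Equiv.Perm (Fin n) → Equiv.Perm (Fin n),
      (∀ x, φ x ∈ W') →
      (∀ p ∈ W', ∀ x, φ (p * x) = p * φ x) →
      (∀ x : Equiv.Perm (Fin n), ∀ p ∈ W',
        genBruhatLE S' (φ x) (φ (p * x)) → permBruhatLE x (p * x)) →
      φ = fun x => ι (flSig x)) := by
  classical
  have hainj : Function.Injective a := ha.injective
  have hzinv : ∀ j : Fin k, z⁻¹ (a j) = Fin.castLE hkn j := fun j => by rw [← hz j]; simp
  have ιa : ∀ (u : Equiv.Perm (Fin k)) (i : Fin k), ι u (a i) = a (u i) := by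
    intro u i
    rw [hι]
    simp only [Equiv.Perm.mul_apply]
    rw [hzinv, (hL u).1, hz]
  have ιfix : ∀ (u : Equiv.Perm (Fin k)) (b : Fin n), (∀ i, b ≠ a i) → ι u b = b := by
    intro u b hb
    rw [hι]
    have h1 : ∀ j : Fin k, z⁻¹ b ≠ Fin.castLE hkn j := by
      intro j hj
      exact hb j (by rw [← hz j, ← hj]; exact (z.apply_symm_apply b).symm)
    simp only [Equiv.Perm.mul_apply]
    rw [(hL u).2 _ h1]
    exact z.apply_symm_apply b
  have ιmul : ∀ u v : Equiv.Perm (Fin k), ι (u * v) = ι u * ι v := by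
    intro u v
    have hLm : L (u * v) = L u * L v := by
      ext b
      by_cases hb : ∃ j : Fin k, b = Fin.castLE hkn j
      · obtain ⟨j, rfl⟩ := hb
        simp only [Equiv.Perm.mul_apply]
        rw [(hL (u*v)).1, (hL v).1, (hL u).1]
        rfl
      · push_neg at hb
        simp only [Equiv.Perm.mul_apply]
        rw [(hL (u*v)).2 _ hb, (hL v).2 _ hb, (hL u).2 _ hb]
    rw [hι, hι, hι, hLm]
    group
  have hL1 : L 1 = 1 := by
    ext b
    by_cases hb : ∃ j : Fin k, b = Fin.castLE hkn j
    · obtain ⟨j, rfl⟩ := hb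
      rw [(hL 1).1]
      rfl
    · push_neg at hb
      rw [(hL 1).2 _ hb]
      rfl
  have ιone : ι 1 = 1 := by rw [hι, hL1]; group
  have ιprod : ∀ l : List (Equiv.Perm (Fin k)), (l.map ι).prod = ι l.prod := by
    intro l
    induction l with
    | nil => simp [ιone]
    | cons t l ih => rw [List.map_cons, List.prod_cons, List.prod_cons, ιmul, ih]
  have ιinj : Function.Injective ι := by
    intro u v h
    ext i
    have h2 : ι u (a i) = ι v (a i) := by rw [h]
    rw [ιa, ιa] at h2
    exact congrArg Fin.val (hainj h2)
  have ιinv : ∀ u : Equiv.Perm (Fin k), ι u⁻¹ = (ι u)⁻¹ := by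
    intro u
    apply mul_right_cancel (b := ι u)
    rw [← ιmul, inv_mul_cancel, inv_mul_cancel, ιone]
  have ι_swap : ∀ i j : Fin k, ι (Equiv.swap i j) = Equiv.swap (a i) (a j) := by
    intro i j
    ext b
    by_cases hb : ∃ i', b = a i'
    · obtain ⟨i', rfl⟩ := hb
      rw [ιa]
      rcases eq_or_ne i' i with rfl | h1
      · rw [Equiv.swap_apply_left, Equiv.swap_apply_left]
      rcases eq_or_ne i' j with rfl | h2
      · rw [Equiv.swap_apply_right, Equiv.swap_apply_right]
      · rw [Equiv.swap_apply_of_ne_of_ne h1 h2,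
          Equiv.swap_apply_of_ne_of_ne (fun h => h1 (hainj h)) (fun h => h2 (hainj h))]
    · push_neg at hb
      rw [ιfix _ _ hb, Equiv.swap_apply_of_ne_of_ne (hb i) (hb j)]
  have adjS' : ∀ i j : Fin k, (i : ℕ) + 1 = (j : ℕ) → ι (Equiv.swap i j) ∈ S' := by
    intro i j h
    rw [hS']
    exact ⟨i, j, h, ι_swap i j⟩
  have word_mem : ∀ l : List (Equiv.Perm (Fin k)),
      (∀ t ∈ l, ∃ c d : Fin k, (c : ℕ) + 1 = (d : ℕ) ∧ t = Equiv.swap c d) →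
      ι l.prod ∈ Subgroup.closure S' := by
    intro l
    induction l with
    | nil => intro _; rw [List.prod_nil, ιone]; exact Subgroup.one_mem _
    | cons t l ih =>
      intro h
      obtain ⟨c, d, hadj, rfl⟩ := h _ List.mem_cons_self
      rw [List.prod_cons, ιmul]
      exact Subgroup.mul_mem _ (Subgroup.subset_closure (adjS' c d hadj))
        (ih (fun t' ht' => h t' (List.mem_cons_of_mem _ ht')))
  have ι_mem : ∀ u : Equiv.Perm (Fin k), ι u ∈ Subgroup.closure S' := by
    intro u
    obtain ⟨l, h1, _, h3⟩ := Aux9.bubble (invCount u) u rfl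
    rw [← h3]
    exact word_mem l h1
  have hS'sub : Subgroup.closure S' ≤ W' := by
    rw [hW']
    apply Subgroup.closure_mono
    rw [hS']
    rintro t ⟨i, j, hij, rfl⟩
    exact ⟨i, j, fun h => by rw [h] at hij; omega, rfl⟩
  have hclosS' : Subgroup.closure S' = W' := by
    refine le_antisymm hS'sub ?_
    rw [hW']
    rw [Subgroup.closure_le]
    rintro t ⟨i, j, hij, rfl⟩
    rw [← ι_swap]
    exact ι_mem _
  have hιmemW : ∀ u : Equiv.Perm (Fin k), ι u ∈ W' := fun u => hS'sub (ι_mem u)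
  have hrangeSet : Set.range ι = (W' : Set (Equiv.Perm (Fin n))) := by
    apply Set.Subset.antisymm
    · rintro t ⟨u, rfl⟩
      exact hιmemW u
    · intro t ht
      rw [← hclosS'] at ht
      -- closure S' ≤ range of the hom
      have : t ∈ (MonoidHom.mk' ι ιmul).range := by
        revert ht
        have hle : Subgroup.closure S' ≤ (MonoidHom.mk' ι ιmul).range := by
          rw [Subgroup.closure_le]
          rw [hS']
          rintro t' ⟨i, j, hij, rfl⟩
          exact ⟨Equiv.swap i j, ι_swap i j⟩
        exact fun ht => hle ht
      obtain ⟨u, hu⟩ := this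
      exact ⟨u, hu⟩
  -- Part 1 data
  have part1 : ∃ (T : Set (Equiv.Perm (Fin n))) (g : Equiv.Perm (Fin n)),
      T ⊆ adjTranspositions n ∧
      W' = Subgroup.closure ((fun t => g * t * g⁻¹) '' T) := by
    refine ⟨{t | ∃ i j : Fin k, (i : ℕ) + 1 = (j : ℕ) ∧
      t = Equiv.swap (Fin.castLE hkn i) (Fin.castLE hkn j)}, z, ?_, ?_⟩
    · rintro t ⟨i, j, hij, rfl⟩
      exact ⟨Fin.castLE hkn i, Fin.castLE hkn j, by simpa using hij, rfl⟩
    · have himg : (fun t => z * t * z⁻¹) ''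
          {t | ∃ i j : Fin k, (i : ℕ) + 1 = (j : ℕ) ∧
            t = Equiv.swap (Fin.castLE hkn i) (Fin.castLE hkn j)} = S' := by
        rw [hS']
        ext t
        constructor
        · rintro ⟨t', ⟨i, j, hij, rfl⟩, rfl⟩
          refine ⟨i, j, hij, ?_⟩
          simp only
          rw [← Equiv.swap_apply_apply, hz, hz]
        · rintro ⟨i, j, hij, rfl⟩
          refine ⟨Equiv.swap (Fin.castLE hkn i) (Fin.castLE hkn j), ⟨i, j, hij, rfl⟩, ?_⟩
          simp only
          rw [← Equiv.swap_apply_apply, hz, hz]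
      rw [himg, hclosS']
  -- flattening positions are unique
  have flposU : ∀ (y : Equiv.Perm (Fin n)) (p p' : Fin k → Fin n), StrictMono p → StrictMono p' →
      (∀ j, ∃ i, y (p j) = a i) → (∀ j, ∃ i, y (p' j) = a i) → p = p' := by
    intro y p p' hp hp' h1 h2
    set s : Finset (Fin n) := Finset.univ.filter (fun b => ∃ i, y b = a i) with hs
    have hmem : ∀ (q : Fin k → Fin n), (∀ j, ∃ i, y (q j) = a i) → ∀ j, q j ∈ s := by
      intro q hq j
      rw [hs, Finset.mem_filter]
      exact ⟨Finset.mem_univ _, hq j⟩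
    have hcard : s.card = k := by
      have hseq : s = Finset.image (fun i => y⁻¹ (a i)) Finset.univ := by
        ext b
        rw [hs, Finset.mem_filter, Finset.mem_image]
        constructor
        · rintro ⟨-, i, hi⟩
          exact ⟨i, Finset.mem_univ _, by rw [← hi]; exact y.symm_apply_apply b⟩
        · rintro ⟨i, -, rfl⟩
          exact ⟨Finset.mem_univ _, i, y.apply_symm_apply (a i)⟩
      rw [hseq, Finset.card_image_of_injective Finset.univ
        (show Function.Injective (fun i => y⁻¹ (a i)) from
          fun i j hij => hainj (y⁻¹.injective hij)), Finset.card_univ, Fintype.card_fin]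
    rw [Finset.orderEmbOfFin_unique hcard (hmem p h1) hp,
      Finset.orderEmbOfFin_unique hcard (hmem p' h2) hp']
  have flU : ∀ (y : Equiv.Perm (Fin n)) (p : Fin k → Fin n) (w : Equiv.Perm (Fin k)),
      StrictMono p → (∀ j, y (p j) = a (w j)) → w = flSig y := by
    intro y p w hp hyp
    obtain ⟨p', hp', hy'⟩ := hfl y
    have hpp : p = p' := flposU y p p' hp hp' (fun j => ⟨w j, hyp j⟩)
      (fun j => ⟨flSig y j, hy' j⟩)
    ext j
    apply congrArg Fin.val
    apply hainj
    rw [← hyp j, hpp, hy' j]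
  have fl_mul : ∀ (u : Equiv.Perm (Fin k)) (x : Equiv.Perm (Fin n)),
      flSig (ι u * x) = u * flSig x := by
    intro u x
    obtain ⟨p, hp, hx⟩ := hfl x
    refine (flU (ι u * x) p (u * flSig x) hp ?_).symm
    intro j
    simp only [Equiv.Perm.mul_apply]
    rw [hx j, ιa]
  have part5 : ∀ p ∈ W', ∀ x : Equiv.Perm (Fin n), ι (flSig (p * x)) = p * ι (flSig x) := by
    intro p hp x
    have hpr : p ∈ Set.range ι := by rw [hrangeSet]; exact hp
    obtain ⟨u, rfl⟩ := hpr
    rw [fl_mul, ιmul]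
  -- genLength formula
  have pullback : ∀ l : List (Equiv.Perm (Fin n)), (∀ g ∈ l, g ∈ S') →
      ∃ l' : List (Equiv.Perm (Fin k)),
        (∀ t ∈ l', ∃ c d : Fin k, (c : ℕ) + 1 = (d : ℕ) ∧ t = Equiv.swap c d) ∧
        l'.length = l.length ∧ ι l'.prod = l.prod := by
    intro l
    induction l with
    | nil => exact fun _ => ⟨[], by simp, by simp, by simp [ιone]⟩
    | cons g l ih =>
      intro h
      obtain ⟨l', h1, h2, h3⟩ := ih (fun g' hg' => h g' (List.mem_cons_of_mem _ hg'))
      have hg := h g List.mem_cons_self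
      rw [hS'] at hg
      obtain ⟨c, d, hadj, rfl⟩ := hg
      refine ⟨Equiv.swap c d :: l', ?_, by simp [h2], ?_⟩
      · rintro t ht
        rcases List.mem_cons.1 ht with rfl | ht'
        · exact ⟨c, d, hadj, rfl⟩
        · exact h1 t ht'
      · rw [List.prod_cons, List.prod_cons, ιmul, ι_swap, h3]
  have hword : ∀ u : Equiv.Perm (Fin k),
      invCount u ∈ {N | ∃ l : List (Equiv.Perm (Fin n)),
        (∀ g ∈ l, g ∈ S') ∧ l.length = N ∧ l.prod = ι u} := by
    intro u
    obtain ⟨l, hl1, hl2, hl3⟩ := Aux9.bubble (invCount u) u rfl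
    refine ⟨l.map ι, ?_, ?_, ?_⟩
    · rintro g hg
      obtain ⟨t, ht, rfl⟩ := List.mem_map.1 hg
      obtain ⟨c, d, hadj, rfl⟩ := hl1 t ht
      exact adjS' c d hadj
    · rw [List.length_map, hl2]
    · rw [← hl3]
      exact ιprod l
  have hgen : ∀ u : Equiv.Perm (Fin k), genLength S' (ι u) = invCount u := by
    intro u
    apply le_antisymm
    · exact Nat.sInf_le (hword u)
    · apply le_csInf ⟨invCount u, hword u⟩
      rintro N ⟨l, hl1, hl2, hl3⟩
      obtain ⟨l', h1, h2, h3⟩ := pullback l hl1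
      have : l'.prod = u := ιinj (by rw [h3, hl3])
      rw [← hl2, ← h2, ← this]
      exact Aux9.word_le l' h1
  -- reflections are transpositions of Σ-values
  have hrefl : ∀ r ∈ genReflections S', ∃ i j : Fin k, i ≠ j ∧ r = Equiv.swap (a i) (a j) := by
    rintro r ⟨w, hw, t, ht, rfl⟩
    rw [hS'] at ht
    obtain ⟨i, j, hij, rfl⟩ := ht
    have hwW : w ∈ Set.range ι := by
      rw [hrangeSet, ← hclosS']
      exact hw
    obtain ⟨u, rfl⟩ := hwW
    have hijne : i ≠ j := fun h => by rw [h] at hij; omega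
    refine ⟨u i, u j, fun h => hijne (u.injective h), ?_⟩
    have hconj : u * Equiv.swap i j * u⁻¹ = Equiv.swap (u i) (u j) :=
      (Equiv.swap_apply_apply u i j).symm
    rw [← ι_swap i j, ← ιinv, ← ιmul, ← ιmul, hconj, ι_swap]
  -- identity is below everything in W'
  have one_le_aux : ∀ (N : ℕ) (u : Equiv.Perm (Fin k)), invCount u = N →
      genBruhatLE S' 1 (ι u) := by
    intro N
    induction N using Nat.strong_induction_on with
    | _ N ih =>
      intro u hN
      rcases eq_or_ne u 1 with rfl | hu
      · rw [ιone]
        exact Relation.ReflTransGen.refl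
      · obtain ⟨c, d, hadj, hdes⟩ := Aux9.exists_descent u hu
        set u' := Equiv.swap c d * u with hu'
        have h1 : u'⁻¹ c < u'⁻¹ d := by
          rw [hu', (Aux9.inv_swap_mul_apply u c d).1, (Aux9.inv_swap_mul_apply u c d).2]
          exact hdes
        have h2 : invCount u = invCount u' + 1 := by
          have := Aux9.key_adj_eq u' c d hadj h1
          rwa [hu', Aux9.swap_swap_mul] at this
        have hstep : genLength S' (ι u') < genLength S' (ι u) := by
          rw [hgen, hgen]
          omega
        have hr : ι u' * (ι u)⁻¹ ∈ genReflections S' := by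
          rw [← ιinv, ← ιmul]
          have he : u' * u⁻¹ = Equiv.swap c d := by rw [hu']; group
          rw [he]
          exact ⟨1, Subgroup.one_mem _, ι (Equiv.swap c d), adjS' c d hadj, by group⟩
        exact Relation.ReflTransGen.tail (ih (invCount u') (by omega) u' rfl) ⟨hstep, hr⟩
  have one_le : ∀ u : Equiv.Perm (Fin k), genBruhatLE S' 1 (ι u) :=
    fun u => one_le_aux (invCount u) u rfl
  -- invCount is monotone along permBruhatLE
  have mono : ∀ x y : Equiv.Perm (Fin n), permBruhatLE x y → x = y ∨ invCount x < invCount y := by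
    intro x y h
    have h' : Relation.ReflTransGen
        (fun x y : Equiv.Perm (Fin n) => invCount x < invCount y ∧ IsTransposition (x * y⁻¹))
        x y := h
    clear h
    induction h' with
    | refl => exact Or.inl rfl
    | tail hab hbc ih =>
      rcases ih with rfl | hlt
      · exact Or.inr hbc.1
      · exact Or.inr (lt_trans hlt hbc.1)
  have antisym : ∀ x y : Equiv.Perm (Fin n), permBruhatLE x y → permBruhatLE y x → x = y := by
    intro x y h1 h2
    rcases mono x y h1 with rfl | hlt1
    · rfl
    rcases mono y x h2 with he | hlt2
    · exact he.symm
    · omega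
  -- the key counting step
  have step6 : ∀ (xb : Equiv.Perm (Fin n)) (i j : Fin k), i < j →
      invCount (flSig xb) < invCount (Equiv.swap i j * flSig xb) →
      invCount xb < invCount (Equiv.swap (a i) (a j) * xb) := by
    intro xb i j hij hcnt
    have hw := (Aux9.key_iff (flSig xb) i j hij).1 hcnt
    obtain ⟨pb, hpb, hxb⟩ := hfl xb
    have hpos : ∀ i' : Fin k, xb⁻¹ (a i') = pb ((flSig xb)⁻¹ i') := by
      intro i'
      have : xb (pb ((flSig xb)⁻¹ i')) = a i' := by
        rw [hxb, show (flSig xb) ((flSig xb)⁻¹ i') = i' from (flSig xb).apply_symm_apply i']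
      rw [← this]; exact xb.symm_apply_apply _
    have hlt2 : xb⁻¹ (a i) < xb⁻¹ (a j) := by
      rw [hpos i, hpos j]
      exact hpb hw
    exact Aux9.key_lt xb (a i) (a j) (ha hij) hlt2
  have step6' : ∀ (xb : Equiv.Perm (Fin n)) (i j : Fin k), i ≠ j →
      invCount (flSig xb) < invCount (Equiv.swap i j * flSig xb) →
      invCount xb < invCount (Equiv.swap (a i) (a j) * xb) := by
    intro xb i j hij hcnt
    rcases lt_or_gt_of_ne hij with h | h
    · exact step6 xb i j h hcnt
    · rw [Equiv.swap_comm] at hcnt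
      rw [Equiv.swap_comm]
      exact step6 xb j i h hcnt
  have part6 : ∀ x : Equiv.Perm (Fin n), ∀ p ∈ W',
      genBruhatLE S' (ι (flSig x)) (ι (flSig (p * x))) → permBruhatLE x (p * x) := by
    intro x p hp h
    set A := ι (flSig x) with hA
    have hB : ι (flSig (p * x)) = p * A := part5 p hp x
    have claim : ∀ y : Equiv.Perm (Fin n),
        Relation.ReflTransGen
          (fun s t => genLength S' s < genLength S' t ∧ s * t⁻¹ ∈ genReflections S') A y →
        (∃ w, ι w = y) ∧ permBruhatLE x (y * A⁻¹ * x) := by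
      intro y hy
      induction hy with
      | refl =>
        refine ⟨⟨flSig x, rfl⟩, ?_⟩
        rw [mul_inv_cancel, one_mul]
        exact Relation.ReflTransGen.refl
      | tail hab hbc ih =>
        rename_i b c
        obtain ⟨⟨w, rfl⟩, hchain⟩ := ih
        obtain ⟨hlen, hr⟩ := hbc
        obtain ⟨i, j, hij, hrS⟩ := hrefl _ hr
        have hc : c = Equiv.swap (a i) (a j) * ι w := by
          have h1 : c⁻¹ = (ι w)⁻¹ * Equiv.swap (a i) (a j) := by rw [← hrS]; group
          calc c = (c⁻¹)⁻¹ := (inv_inv c).symm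
            _ = ((ι w)⁻¹ * Equiv.swap (a i) (a j))⁻¹ := by rw [h1]
            _ = (Equiv.swap (a i) (a j))⁻¹ * ι w := by rw [mul_inv_rev, inv_inv]
            _ = _ := by rw [Equiv.swap_inv]
        have hcι : c = ι (Equiv.swap i j * w) := by rw [ιmul, ι_swap, ← hc]
        -- flSig of the base point
        have hqW : ι w * A⁻¹ ∈ W' := Subgroup.mul_mem _ (hιmemW w)
          (Subgroup.inv_mem _ (hιmemW (flSig x)))
        have h5 := part5 (ι w * A⁻¹) hqW x
        have hflxb : flSig (ι w * A⁻¹ * x) = w := by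
          apply ιinj
          rw [h5, hA]
          group
        -- the counting inequality
        have hcnt : invCount w < invCount (Equiv.swap i j * w) := by
          have := hlen
          rw [hcι] at this
          rw [hgen, hgen] at this
          exact this
        have hcnt2 : invCount (ι w * A⁻¹ * x) <
            invCount (Equiv.swap (a i) (a j) * (ι w * A⁻¹ * x)) := by
          apply step6' _ i j hij
          rw [hflxb]
          exact hcnt
        refine ⟨⟨Equiv.swap i j * w, hcι.symm⟩, ?_⟩
        have hexp : c * A⁻¹ * x = Equiv.swap (a i) (a j) * (ι w * A⁻¹ * x) := by
          rw [hc]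
          group
        rw [hexp]
        refine Relation.ReflTransGen.tail hchain ⟨hcnt2, ?_⟩
        refine ⟨a i, a j, fun hh => hij (hainj hh), ?_⟩
        rw [mul_inv_rev]
        rw [show (ι w * A⁻¹ * x) * ((ι w * A⁻¹ * x)⁻¹ * (Equiv.swap (a i) (a j))⁻¹) =
          (Equiv.swap (a i) (a j))⁻¹ by group, Equiv.swap_inv]
    have hfin := (claim _ (hB ▸ h)).2
    have : p * A * A⁻¹ * x = p * x := by group
    rwa [this] at hfin
  -- part 7: uniqueness of the pattern map
  have part7 : ∀ φ : Equiv.Perm (Fin n) → Equiv.Perm (Fin n),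
      (∀ x, φ x ∈ W') →
      (∀ p ∈ W', ∀ x, φ (p * x) = p * φ x) →
      (∀ x : Equiv.Perm (Fin n), ∀ p ∈ W',
        genBruhatLE S' (φ x) (φ (p * x)) → permBruhatLE x (p * x)) →
      φ = fun x => ι (flSig x) := by
    intro φ hmem hequiv hord
    funext x
    set q := ι (flSig x) with hqdef
    have hqW : q ∈ W' := hιmemW _
    set x0 := q⁻¹ * x with hx0
    have hqx0 : q * x0 = x := by rw [hx0]; group
    have hfl0 : flSig x0 = 1 := by
      apply ιinj
      have h5 := part5 q⁻¹ (Subgroup.inv_mem _ hqW) x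
      rw [hx0, h5, ιone, ← hqdef]
      group
    have key0 : φ x0 = 1 := by
      by_contra hne
      set pp := φ x0 with hpp
      have hppW : pp ∈ W' := hmem x0
      obtain ⟨u0, hu0⟩ : ∃ u0, ι u0 = pp := by
        have : pp ∈ Set.range ι := by rw [hrangeSet]; exact hppW
        exact this
      have hcancel : pp * (pp⁻¹ * x0) = x0 := by group
      have h1 : φ (pp⁻¹ * x0) = 1 := by
        rw [hequiv pp⁻¹ (Subgroup.inv_mem _ hppW) x0, ← hpp]
        group
      -- Bruhat: 1 ≤' pp
      have hord1 : genBruhatLE S' (φ (pp⁻¹ * x0)) (φ (pp * (pp⁻¹ * x0))) := by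
        rw [hcancel, h1, ← hpp, ← hu0]
        exact one_le u0
      have hbA := hord (pp⁻¹ * x0) pp hppW hord1
      rw [hcancel] at hbA
      -- Bruhat: 1 ≤' pp⁻¹, via part6
      have hord2 : genBruhatLE S' (ι (flSig x0)) (ι (flSig (pp⁻¹ * x0))) := by
        have h5 := part5 pp⁻¹ (Subgroup.inv_mem _ hppW) x0
        rw [h5, hfl0, ιone, mul_one, ← hu0, ← ιinv]
        exact one_le u0⁻¹
      have hbB := part6 x0 pp⁻¹ (Subgroup.inv_mem _ hppW) hord2
      have heq := antisym (pp⁻¹ * x0) x0 hbA hbB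
      apply hne
      have : pp⁻¹ = 1 := by
        have := mul_right_cancel (b := x0) (a := pp⁻¹) (c := 1) (by rw [one_mul, heq])
        exact this
      rw [← inv_inv pp, this, inv_one]
    calc φ x = φ (q * x0) := by rw [hqx0]
      _ = q * φ x0 := hequiv q hqW x0
      _ = q := by rw [key0, mul_one]
      _ = ι (flSig x) := by rw [hqdef]
  exact ⟨part1, ιmul, ιinj, hrangeSet, part5, part6, part7⟩
end
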